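/- arXiv:2605.16511 — 2 statements merged into one kernel-verified Lean document; each statement's English description precedes it below -/
import Mathlib

section
/- For every finite connected graph H with at least one edge, the mixing time of the lazy random walk on H is at most 8·diam(H)·|E(H)|, where diam(H) is the diameter of H and |E(H)| is its number of edges. -/
open scoped Classical
open Filter

namespace RandomGraphPaper

/-- A degree sequence: a nondecreasing tuple of naturals. -/
structure DegSeq where
  n : ℕ
  d : Fin n → ℕ
  mono : Monotone d

noncomputable section

/-- Degree of a vertex. -/
def deg {V : Type} [Fintype V] (G : SimpleGraph V) (v : V) : ℕ :=
  (Finset.univ.filter fun w => G.Adj v w).card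

/-- Edge set as a finset. -/
def edges {V : Type} [Fintype V] (G : SimpleGraph V) : Finset (Sym2 V) :=
  Finset.univ.filter fun e => e ∈ G.edgeSet

/-- The set of simple graphs on `Fin D.n` realizing the degree sequence `D`. -/
def graphs (D : DegSeq) : Finset (SimpleGraph (Fin D.n)) :=
  Finset.univ.filter fun G => ∀ i, deg G i = D.d i

/-- A degree sequence is feasible if some simple graph realizes it. -/
def Feasible (D : DegSeq) : Prop := (graphs D).Nonempty

/-- Probability that a uniformly random simple graph with degree sequence `D`
satisfies the property `P`. -/
def prob (D : DegSeq) (P : SimpleGraph (Fin D.n) → Prop) : ℝ :=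
  ((graphs D).filter P).card / (graphs D).card

/-- `m(D)`: the number of edges. -/
def mD (D : DegSeq) : ℕ := (∑ i, D.d i) / 2

/-- `n_k(D)`: the number of entries equal to `k`. -/
def nk (D : DegSeq) (k : ℕ) : ℕ := (Finset.univ.filter fun i => D.d i = k).card

/-- `m^{≠2}(D) = m(D) - n₂(D)`. -/
def mne2 (D : DegSeq) : ℕ := mD D - nk D 2

/-- Maximum degree `Δ(D)`. -/
def maxDeg (D : DegSeq) : ℕ := Finset.univ.sup D.d

/-- A property of the random graphs holds with high probability along the sequence `Ds`. -/
def WHP (Ds : ℕ → DegSeq) (P : ∀ ℓ, SimpleGraph (Fin (Ds ℓ).n) → Prop) : Prop :=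
  Tendsto (fun ℓ => prob (Ds ℓ) (P ℓ)) atTop (nhds 1)

/-- Order (number of vertices) of a connected component. -/
def compOrder {n : ℕ} (G : SimpleGraph (Fin n)) (c : G.ConnectedComponent) : ℕ :=
  (Finset.univ.filter fun v => G.connectedComponentMk v = c).card

/-- Number of edges of a connected component. -/
def compEdges {n : ℕ} (G : SimpleGraph (Fin n)) (c : G.ConnectedComponent) : ℕ :=
  ((edges G).filter fun e => ∀ v ∈ e, G.connectedComponentMk v = c).card

/-- Diameter of a connected component. -/
def compDiam {n : ℕ} (G : SimpleGraph (Fin n)) (c : G.ConnectedComponent) : ℕ :=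
  Finset.univ.sup fun p : Fin n × Fin n =>
    if G.connectedComponentMk p.1 = c ∧ G.connectedComponentMk p.2 = c then G.dist p.1 p.2 else 0

/-- The sequence of degree sequences has a giant component. -/
def HasGiant (Ds : ℕ → DegSeq) : Prop :=
  ∃ ε : ℝ, 0 < ε ∧
    WHP Ds fun ℓ G => ∃ c : G.ConnectedComponent, ε * ((Ds ℓ).n : ℝ) ≤ (compOrder G c : ℝ)

/-- The sequence of degree sequences has a gigantic component. -/
def HasGigantic (Ds : ℕ → DegSeq) : Prop :=
  ∃ ε : ℝ, 0 < ε ∧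
    WHP Ds fun ℓ G => ∃ c : G.ConnectedComponent, ε * (mD (Ds ℓ) : ℝ) ≤ (compEdges G c : ℝ)

/-- Transition matrix of the lazy random walk on `H`. -/
def lazyP {V : Type} [Fintype V] (H : SimpleGraph V) : Matrix V V ℝ :=
  Matrix.of fun u v =>
    if u = v then 1 / 2 else if H.Adj u v then 1 / (2 * (deg H u : ℝ)) else 0

/-- Stationary distribution of the lazy random walk on `H`. -/
def statDist {V : Type} [Fintype V] (H : SimpleGraph V) : V → ℝ :=
  fun v => (deg H v : ℝ) / (2 * ((edges H).card : ℝ))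

/-- Total variation distance between two distributions on a finite set. -/
def tvDist {V : Type} [Fintype V] (μ ν : V → ℝ) : ℝ :=
  ⨆ A : Finset V, |∑ v ∈ A, μ v - ∑ v ∈ A, ν v|

/-- Mixing time of the lazy random walk on `H`. -/
def mixingTime {V : Type} [Fintype V] (H : SimpleGraph V) : ℕ :=
  Finset.univ.sup fun i : V =>
    sInf {t : ℕ | tvDist (fun v => (lazyP H ^ t) i v) (statDist H) < (Real.exp 1)⁻¹}

/-- Mixing time of the lazy random walk on a connected component. -/
def compMix {n : ℕ} (G : SimpleGraph (Fin n)) (c : G.ConnectedComponent) : ℕ :=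
  mixingTime (G.induce c.supp)

/-- Sum of the degrees over a set of vertices. -/
def setDeg {V : Type} [Fintype V] (H : SimpleGraph V) (S : Finset V) : ℕ :=
  ∑ v ∈ S, deg H v

/-- Number of edges with exactly one endpoint in `S`. -/
def outS {V : Type} [Fintype V] (H : SimpleGraph V) (S : Finset V) : ℕ :=
  ((edges H).filter fun e => ∃ u v, e = s(u, v) ∧ u ∈ S ∧ v ∉ S).card

/-- Conductance of a set of vertices, as an extended nonnegative real. -/
def condS {V : Type} [Fintype V] (H : SimpleGraph V) (S : Finset V) : ENNReal :=
  ENNReal.ofReal ((outS H S : ℝ) / (setDeg H S : ℝ))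

/-- `cond(x)`: the minimum conductance over connected sets `S` with
`x/2 ≤ d(S) ≤ min x (d(V)/2)`; it is `⊤` if no such set exists. -/
def condAt {V : Type} [Fintype V] (H : SimpleGraph V) (x : ℝ) : ENNReal :=
  ⨅ (S : Finset V) (_ : (H.induce (S : Set V)).Connected ∧
      x / 2 ≤ (setDeg H S : ℝ) ∧
      (setDeg H S : ℝ) ≤ min x ((setDeg H Finset.univ : ℝ) / 2)), condS H S

/-- Diameter of a (connected) graph. -/
def graphDiam {V : Type} [Fintype V] (H : SimpleGraph V) : ℕ :=
  Finset.univ.sup fun p : V × V => H.dist p.1 p.2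

/-- `∑_{i=1}^{j} d_i (d_i - 2)` (1-indexed). -/
def partialQ (D : DegSeq) (j : ℕ) : ℤ :=
  ∑ i : Fin D.n, if (i : ℕ) < j then (D.d i : ℤ) * ((D.d i : ℤ) - 2) else 0

/-- `j_D`: the least `j ∈ {1,…,n}` with `∑_{i=1}^j d_i(d_i-2) > 0`, or `n` if none exists. -/
def jD (D : DegSeq) : ℕ :=
  if ∃ j, 1 ≤ j ∧ j ≤ D.n ∧ 0 < partialQ D j
  then sInf {j | 1 ≤ j ∧ j ≤ D.n ∧ 0 < partialQ D j}
  else D.n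

/-- `R_D = ∑_{i=j_D}^n d_i` (1-indexed). -/
def RD (D : DegSeq) : ℕ :=
  ∑ i ∈ Finset.univ.filter (fun i : Fin D.n => jD D - 1 ≤ (i : ℕ)), D.d i

/-- `∑_{i=n-d_n+1}^n d_i` (1-indexed): the sum of the top `d_n` degrees. -/
def topSum (D : DegSeq) : ℕ :=
  ∑ i ∈ Finset.univ.filter (fun i : Fin D.n => D.n - maxDeg D ≤ (i : ℕ)), D.d i

/-- `D` has a `μ`-center. -/
def HasCenter (μ : ℝ) (D : DegSeq) : Prop :=
  μ ^ 2 * (mne2 D : ℝ) ≤ (topSum D : ℝ) ∧ μ ^ 3 * (mD D : ℝ) ≤ (mne2 D : ℝ)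

/-- `cyc(G)`: the number of vertices lying in cycle components of `G`
(a component is a cycle iff all its vertices have degree two). -/
def cyc {n : ℕ} (G : SimpleGraph (Fin n)) : ℕ :=
  (Finset.univ.filter fun v : Fin n =>
    ∀ w, G.connectedComponentMk w = G.connectedComponentMk v → deg G w = 2).card

/-- A maximal degree-two path: a path of positive length whose endpoints have degree `≠ 2`
and whose internal vertices all have degree `2`. -/
def IsMaxPath {n : ℕ} (G : SimpleGraph (Fin n)) {u v : Fin n} (w : G.Walk u v) : Prop :=
  w.IsPath ∧ 0 < w.length ∧ deg G u ≠ 2 ∧ deg G v ≠ 2 ∧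
    ∀ x ∈ w.support, x ≠ u → x ≠ v → deg G x = 2

/-- The maximal degree-two paths of `G`, identified with their edge sets. -/
def maxPaths {n : ℕ} (G : SimpleGraph (Fin n)) : Finset (Finset (Sym2 (Fin n))) :=
  Finset.univ.filter fun E =>
    ∃ (u v : Fin n) (w : G.Walk u v), IsMaxPath G w ∧ E = w.edges.toFinset

/-- `r(G)`: number of red (length-one) maximal degree-two paths. -/
def rG {n : ℕ} (G : SimpleGraph (Fin n)) : ℕ := ((maxPaths G).filter fun E => E.card = 1).card

/-- `y(G)`: number of yellow (length-two) maximal degree-two paths. -/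
def yG {n : ℕ} (G : SimpleGraph (Fin n)) : ℕ := ((maxPaths G).filter fun E => E.card = 2).card

/-- `g(G)`: number of green (length at least three) maximal degree-two paths. -/
def gG {n : ℕ} (G : SimpleGraph (Fin n)) : ℕ := ((maxPaths G).filter fun E => 3 ≤ E.card).card

/-- The vertices lying on a set of edges. -/
def pathVerts {n : ℕ} (E : Finset (Sym2 (Fin n))) : Finset (Fin n) :=
  Finset.univ.filter fun v => ∃ e ∈ E, v ∈ e

/-- `F_{r,y,g}(D)`: the graphs with degree sequence `D` having the given colour counts. -/
def Frya (D : DegSeq) (r y g : ℕ) : Finset (SimpleGraph (Fin D.n)) :=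
  (graphs D).filter fun G => rG G = r ∧ yG G = y ∧ gG G = g

/-- The vertex set of the 2-core: the union of all sets in which every vertex has
at least two neighbours inside the set. -/
def coreSet {n : ℕ} (G : SimpleGraph (Fin n)) : Set (Fin n) :=
  ⋃₀ {S : Set (Fin n) | ∀ v ∈ S, 2 ≤ (Finset.univ.filter fun w => w ∈ S ∧ G.Adj v w).card}

/-- Degree of a vertex within the 2-core. -/
def coreDeg {n : ℕ} (G : SimpleGraph (Fin n)) (v : Fin n) : ℕ :=
  (Finset.univ.filter fun w => w ∈ coreSet G ∧ G.Adj v w).card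

/-- A kernel vertex: a vertex of the 2-core with at least three neighbours in the 2-core. -/
def IsKernelVertex {n : ℕ} (G : SimpleGraph (Fin n)) (v : Fin n) : Prop :=
  v ∈ coreSet G ∧ 3 ≤ coreDeg G v

/-- The sum of kernel degrees over all kernel vertices. -/
def kernelDegSum {n : ℕ} (G : SimpleGraph (Fin n)) : ℕ :=
  ∑ v ∈ Finset.univ.filter (fun v => IsKernelVertex G v), coreDeg G v

end

noncomputable section MixAux

section Mix

variable {V : Type} [Fintype V] (H : SimpleGraph V)

lemma edges_eq : edges H = H.edgeFinset := by
  ext e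
  simp [edges, SimpleGraph.mem_edgeFinset]

lemma deg_eq (v : V) : deg H v = H.degree v := by
  rw [deg, ← SimpleGraph.neighborFinset_eq_filter, SimpleGraph.degree]

lemma sum_deg : ∑ v, (deg H v : ℝ) = 2 * ((edges H).card : ℝ) := by
  have h := SimpleGraph.sum_degrees_eq_twice_card_edges H
  have : ∑ v, deg H v = 2 * (edges H).card := by
    rw [edges_eq]
    simpa [deg_eq] using h
  exact_mod_cast this

lemma deg_pos (hconn : H.Connected) (hE : (edges H).Nonempty) (v : V) :
    0 < deg H v := by
  obtain ⟨e, he⟩ := hE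
  rw [edges, Finset.mem_filter] at he
  induction e with
  | h a b =>
    have hab : H.Adj a b := he.2
    have hne : ∃ u : V, u ≠ v := by
      by_cases hav : a = v
      · exact ⟨b, fun hbv => H.ne_of_adj hab (by rw [hav, hbv])⟩
      · exact ⟨a, hav⟩
    obtain ⟨u, hu⟩ := hne
    obtain ⟨p⟩ := hconn.preconnected v u
    cases p with
    | nil => exact absurd rfl (Ne.symm hu)
    | @cons _ w _ h q =>
      rw [deg]
      refine Finset.card_pos.mpr ⟨w, ?_⟩
      simp [h]

lemma P_nonneg (x y : V) : 0 ≤ lazyP H x y := by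
  simp only [lazyP, Matrix.of_apply]
  split
  · norm_num
  · split
    · positivity
    · exact le_refl 0

lemma P_apply (x y : V) : lazyP H x y
    = (if y = x then (1:ℝ)/2 else 0) + (if H.Adj x y then 1 / (2 * (deg H x : ℝ)) else 0) := by
  simp only [lazyP, Matrix.of_apply]
  by_cases hxy : x = y
  · subst hxy
    simp [H.loopless.irrefl x]
  · simp [hxy, Ne.symm hxy]

lemma P_diag (x : V) : lazyP H x x = 1/2 := by
  simp only [lazyP, Matrix.of_apply, if_pos rfl]
  norm_num

lemma P_rowsum (hconn : H.Connected) (hE : (edges H).Nonempty) (x : V) :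
    ∑ z, lazyP H x z = 1 := by
  have hd : 0 < (deg H x : ℝ) := by exact_mod_cast deg_pos H hconn hE x
  have h1 : ∑ z, lazyP H x z
      = ∑ z, ((if z = x then (1:ℝ)/2 else 0) + (if H.Adj x z then 1 / (2 * (deg H x : ℝ)) else 0)) :=
    Finset.sum_congr rfl fun z _ => P_apply H x z
  rw [h1, Finset.sum_add_distrib, Finset.sum_ite_eq' Finset.univ x (fun _ => (1:ℝ)/2)]
  have h2 : ∑ z, (if H.Adj x z then 1 / (2 * (deg H x : ℝ)) else 0)
      = (deg H x : ℝ) * (1 / (2 * (deg H x : ℝ))) := by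
    rw [← Finset.sum_filter, Finset.sum_const, deg, nsmul_eq_mul]
  rw [h2]
  field_simp
  norm_num

lemma edges_card_pos (hE : (edges H).Nonempty) : 0 < ((edges H).card : ℝ) := by
  exact_mod_cast Finset.card_pos.mpr hE

lemma statDist_pos (hconn : H.Connected) (hE : (edges H).Nonempty) (v : V) :
    0 < statDist H v := by
  have h1 : 0 < (deg H v : ℝ) := by exact_mod_cast deg_pos H hconn hE v
  have h2 := edges_card_pos H hE
  rw [statDist]
  positivity

lemma sum_statDist (hE : (edges H).Nonempty) : ∑ v, statDist H v = 1 := by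
  have h2 := edges_card_pos H hE
  simp only [statDist]
  rw [← Finset.sum_div, sum_deg]
  field_simp

lemma reversible (x y : V) :
    statDist H x * lazyP H x y = statDist H y * lazyP H y x := by
  by_cases hxy : x = y
  · rw [hxy]
  · by_cases hadj : H.Adj x y
    · have hx : (0:ℝ) < deg H x := by
        refine Nat.cast_pos.mpr (Finset.card_pos.mpr ⟨y, ?_⟩)
        simp [deg, hadj]
      have hy : (0:ℝ) < deg H y := by
        refine Nat.cast_pos.mpr (Finset.card_pos.mpr ⟨x, ?_⟩)
        simp [deg, hadj.symm]
      simp only [lazyP, Matrix.of_apply, statDist, if_neg hxy, if_neg (Ne.symm hxy),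
        if_pos hadj, if_pos hadj.symm]
      have hM : 0 < ((edges H).card : ℝ) :=
        edges_card_pos H ⟨s(x,y), by simp [edges, hadj]⟩
      rw [div_mul_eq_mul_div, div_mul_eq_mul_div, mul_one_div, mul_one_div,
        div_div, div_div,
        div_eq_div_iff (by positivity) (by positivity)]
      ring
    · simp only [lazyP, Matrix.of_apply, statDist, if_neg hxy, if_neg (Ne.symm hxy),
        if_neg hadj, if_neg (fun h => hadj (H.adj_symm h))]
      ring

lemma stationary (hconn : H.Connected) (hE : (edges H).Nonempty) (z : V) :
    ∑ x, statDist H x * lazyP H x z = statDist H z := by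
  have : ∀ x, statDist H x * lazyP H x z = statDist H z * lazyP H z x :=
    fun x => reversible H x z
  rw [Finset.sum_congr rfl fun x _ => this x, ← Finset.mul_sum, P_rowsum H hconn hE, mul_one]

lemma powP_nonneg (t : ℕ) (x y : V) : 0 ≤ (lazyP H ^ t) x y := by
  induction t generalizing x y with
  | zero =>
    simp only [pow_zero, Matrix.one_apply]
    split <;> norm_num
  | succ n ih =>
    rw [pow_succ, Matrix.mul_apply]
    exact Finset.sum_nonneg fun z _ => mul_nonneg (ih x z) (P_nonneg H z y)

lemma powP_rowsum (hconn : H.Connected) (hE : (edges H).Nonempty) (t : ℕ) (x : V) :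
    ∑ z, (lazyP H ^ t) x z = 1 := by
  induction t generalizing x with
  | zero => simp [Matrix.one_apply]
  | succ n ih =>
    rw [show ∑ z, (lazyP H ^ (n+1)) x z = ∑ z, ∑ w, (lazyP H ^ n) x w * lazyP H w z by
      exact Finset.sum_congr rfl fun z _ => by rw [pow_succ, Matrix.mul_apply]]
    rw [Finset.sum_comm]
    have : ∀ w, ∑ z, (lazyP H ^ n) x w * lazyP H w z = (lazyP H ^ n) x w := by
      intro w
      rw [← Finset.mul_sum, P_rowsum H hconn hE, mul_one]
    rw [Finset.sum_congr rfl fun w _ => this w, ih]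

lemma P_pos_of_adj {x z : V} (h : H.Adj x z) : 0 < lazyP H x z := by
  have hd : (0:ℝ) < deg H x := by
    refine Nat.cast_pos.mpr (Finset.card_pos.mpr ⟨z, ?_⟩)
    simp [deg, h]
  simp only [lazyP, Matrix.of_apply, if_neg (H.ne_of_adj h), if_pos h]
  positivity

lemma min_principle (hconn : H.Connected) (hE : (edges H).Nonempty)
    (φ : V → ℝ) (B : Finset V) (hB : B.Nonempty) (hB0 : ∀ b ∈ B, 0 ≤ φ b)
    (hsh : ∀ x, x ∉ B → ∑ z, lazyP H x z * φ z ≤ φ x) :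
    ∀ x, 0 ≤ φ x := by
  by_contra hneg
  push_neg at hneg
  obtain ⟨x₁, hx₁⟩ := hneg
  obtain ⟨x₀, -, hx₀⟩ := Finset.exists_min_image Finset.univ φ ⟨x₁, Finset.mem_univ x₁⟩
  have hmin : ∀ z, φ x₀ ≤ φ z := fun z => hx₀ z (Finset.mem_univ z)
  have hx0neg : φ x₀ < 0 := lt_of_le_of_lt (hmin x₁) hx₁
  have step : ∀ x, φ x = φ x₀ → ∀ z, H.Adj x z → φ z = φ x₀ := by
    intro x hx z hz
    have hxB : x ∉ B := by
      intro hmem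
      exact absurd (hB0 x hmem) (by rw [hx]; exact not_le.mpr hx0neg)
    have h1 : ∑ w, lazyP H x w * φ w ≤ φ x := hsh x hxB
    have hterm : ∀ w ∈ Finset.univ, 0 ≤ lazyP H x w * (φ w - φ x₀) :=
      fun w _ => mul_nonneg (P_nonneg H x w) (sub_nonneg.mpr (hmin w))
    have hsum : ∑ w, lazyP H x w * (φ w - φ x₀) ≤ 0 := by
      have : ∑ w, lazyP H x w * (φ w - φ x₀)
          = (∑ w, lazyP H x w * φ w) - φ x₀ := by
        rw [show (fun w => lazyP H x w * (φ w - φ x₀))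
            = fun w => lazyP H x w * φ w - lazyP H x w * φ x₀ by
          funext w; ring]
        rw [Finset.sum_sub_distrib, ← Finset.sum_mul, P_rowsum H hconn hE, one_mul]
      rw [this]
      rw [hx] at h1
      linarith
    have hall : ∀ w ∈ Finset.univ, lazyP H x w * (φ w - φ x₀) = 0 :=
      (Finset.sum_eq_zero_iff_of_nonneg hterm).mp (le_antisymm hsum (Finset.sum_nonneg hterm))
    have := hall z (Finset.mem_univ z)
    rcases mul_eq_zero.mp this with h | h
    · exact absurd h (ne_of_gt (P_pos_of_adj H hz))
    · linarith [sub_eq_zero.mp h]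
  have prop : ∀ (x b : V) (p : H.Walk x b), φ x = φ x₀ → φ b = φ x₀ := by
    intro x b p
    induction p with
    | nil => exact fun h => h
    | cons h q ih => exact fun hx => ih (step _ hx _ h)
  obtain ⟨b, hb⟩ := hB
  obtain ⟨p⟩ := hconn.preconnected x₀ b
  have : φ b = φ x₀ := prop x₀ b p rfl
  have := hB0 b hb
  linarith

lemma exists_hit (hconn : H.Connected) (hE : (edges H).Nonempty) (y : V) :
    ∃ h : V → ℝ, h y = 0 ∧ (∀ x, x ≠ y → h x = 1 + ∑ z, lazyP H x z * h z)
      ∧ (∀ x, 0 ≤ h x) := by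
  set K : Matrix V V ℝ := Matrix.of (fun x z => if x = y ∨ z = y then 0 else lazyP H x z) with hK
  set L : (V → ℝ) →ₗ[ℝ] (V → ℝ) := LinearMap.id - K.mulVecLin with hL
  have hKrow : ∀ z, K y z = 0 := fun z => by simp [hK]
  have hKcol : ∀ x, K x y = 0 := fun x => by simp [hK]
  have key : ∀ f : V → ℝ, L f = 0 → (f y = 0 ∧ ∀ x, x ≠ y → f x = ∑ z, lazyP H x z * f z) := by
    intro f hf
    have heq : ∀ x, f x = ∑ z, K x z * f z := by
      intro x
      have := congrFun hf x
      simp only [hL, LinearMap.sub_apply, LinearMap.id_apply, Matrix.mulVecLin_apply,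
        Pi.sub_apply, Pi.zero_apply] at this
      have h2 : (K.mulVec f) x = ∑ z, K x z * f z := by
        rw [Matrix.mulVec, dotProduct]
      rw [h2] at this
      linarith
    have hfy : f y = 0 := by
      rw [heq y]
      exact Finset.sum_eq_zero fun z _ => by rw [hKrow z, zero_mul]
    refine ⟨hfy, fun x hx => ?_⟩
    rw [heq x]
    refine Finset.sum_congr rfl fun z _ => ?_
    by_cases hz : z = y
    · subst hz
      rw [hKcol x, hfy, mul_zero, mul_zero]
    · simp [hK, hx, hz]
  have hinj : Function.Injective L := by
    rw [injective_iff_map_eq_zero]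
    intro f hf
    obtain ⟨hfy, hfrec⟩ := key f hf
    have hpos : ∀ x, 0 ≤ f x := by
      refine min_principle H hconn hE f {y} ⟨y, Finset.mem_singleton_self y⟩ ?_ ?_
      · intro b hb
        rw [Finset.mem_singleton] at hb
        rw [hb, hfy]
      · intro x hx
        rw [Finset.mem_singleton] at hx
        rw [← hfrec x hx]
    have hneg : ∀ x, 0 ≤ -f x := by
      refine min_principle H hconn hE (fun x => -f x) {y} ⟨y, Finset.mem_singleton_self y⟩ ?_ ?_
      · intro b hb
        rw [Finset.mem_singleton] at hb
        subst hb
        simp [hfy]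
      · intro x hx
        rw [Finset.mem_singleton] at hx
        have : ∑ z, lazyP H x z * -f z = -∑ z, lazyP H x z * f z := by
          rw [← Finset.sum_neg_distrib]
          exact Finset.sum_congr rfl fun z _ => by ring
        rw [this, ← hfrec x hx]
    funext x
    have := hpos x
    have := hneg x
    simp only [Pi.zero_apply]
    linarith
  have hsurj : Function.Surjective L := (LinearMap.injective_iff_surjective).mp hinj
  obtain ⟨h, hh⟩ := hsurj (fun x => if x = y then 0 else 1)
  have heq : ∀ x, h x - ∑ z, K x z * h z = (if x = y then 0 else 1) := by
    intro x
    have := congrFun hh x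
    simp only [hL, LinearMap.sub_apply, LinearMap.id_apply, Matrix.mulVecLin_apply,
      Pi.sub_apply] at this
    rw [← this, Matrix.mulVec, dotProduct]
  have hy0 : h y = 0 := by
    have := heq y
    rw [if_pos rfl] at this
    have hz : ∑ z, K y z * h z = 0 := Finset.sum_eq_zero fun z _ => by rw [hKrow z, zero_mul]
    linarith
  have hrec : ∀ x, x ≠ y → h x = 1 + ∑ z, lazyP H x z * h z := by
    intro x hx
    have := heq x
    rw [if_neg hx] at this
    have hsums : ∑ z, K x z * h z = ∑ z, lazyP H x z * h z := by
      refine Finset.sum_congr rfl fun z _ => ?_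
      by_cases hz : z = y
      · subst hz
        rw [hKcol x, hy0, mul_zero, mul_zero]
      · simp [hK, hx, hz]
    rw [hsums] at this
    linarith
  refine ⟨h, hy0, hrec, ?_⟩
  refine min_principle H hconn hE h {y} ⟨y, Finset.mem_singleton_self y⟩ ?_ ?_
  · intro b hb
    rw [Finset.mem_singleton] at hb
    rw [hb, hy0]
  · intro x hx
    rw [Finset.mem_singleton] at hx
    rw [hrec x hx]
    linarith [le_refl (∑ z, lazyP H x z * h z)]

lemma kac (hconn : H.Connected) (hE : (edges H).Nonempty) (y : V) (h : V → ℝ)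
    (hy0 : h y = 0) (hrec : ∀ x, x ≠ y → h x = 1 + ∑ z, lazyP H x z * h z) :
    ∑ z, lazyP H y z * h z = 1 / statDist H y - 1 := by
  set π := statDist H with hπ
  set S := ∑ x, π x * h x with hS
  have e1 : S = ∑ x ∈ Finset.univ.erase y, π x * h x := by
    rw [hS, ← Finset.add_sum_erase _ _ (Finset.mem_univ y), hy0, mul_zero, zero_add]
  have e2 : ∑ x ∈ Finset.univ.erase y, π x * h x
      = (∑ x ∈ Finset.univ.erase y, π x) + ∑ x ∈ Finset.univ.erase y, π x * ∑ z, lazyP H x z * h z := by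
    rw [← Finset.sum_add_distrib]
    refine Finset.sum_congr rfl fun x hx => ?_
    rw [hrec x (Finset.mem_erase.mp hx).1]
    ring
  have e3 : ∑ x ∈ Finset.univ.erase y, π x = 1 - π y := by
    have := Finset.add_sum_erase Finset.univ π (Finset.mem_univ y)
    have h1 := sum_statDist H hE
    rw [← hπ] at h1
    linarith
  have e4 : ∑ x, π x * ∑ z, lazyP H x z * h z = S := by
    have swap : ∑ x, π x * ∑ z, lazyP H x z * h z
        = ∑ z, (∑ x, π x * lazyP H x z) * h z := by
      rw [show (fun x => π x * ∑ z, lazyP H x z * h z)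
          = fun x => ∑ z, π x * lazyP H x z * h z by
        funext x
        rw [Finset.mul_sum]
        exact Finset.sum_congr rfl fun z _ => by ring]
      rw [Finset.sum_comm]
      exact Finset.sum_congr rfl fun z _ => by rw [Finset.sum_mul]
    rw [swap]
    exact Finset.sum_congr rfl fun z _ => by rw [stationary H hconn hE z]
  have e5 : ∑ x ∈ Finset.univ.erase y, π x * ∑ z, lazyP H x z * h z
      = S - π y * ∑ z, lazyP H y z * h z := by
    have := Finset.add_sum_erase Finset.univ (fun x => π x * ∑ z, lazyP H x z * h z)
      (Finset.mem_univ y)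
    rw [e4] at this
    linarith
  have hπy : 0 < π y := statDist_pos H hconn hE y
  have : π y * ∑ z, lazyP H y z * h z = 1 - π y := by
    rw [e1, e2, e3, e5] at *
    linarith [e1]
  field_simp
  linarith

lemma hit_triangle (hconn : H.Connected) (hE : (edges H).Nonempty)
    (y z : V) (hy hz : V → ℝ)
    (hy0 : hy y = 0) (hyrec : ∀ x, x ≠ y → hy x = 1 + ∑ w, lazyP H x w * hy w)
    (hynn : ∀ x, 0 ≤ hy x)
    (hz0 : hz z = 0) (hzrec : ∀ x, x ≠ z → hz x = 1 + ∑ w, lazyP H x w * hz w)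
    (hznn : ∀ x, 0 ≤ hz x) :
    ∀ x, hy x ≤ hz x + hy z := by
  set φ : V → ℝ := fun w => hz w + hy z - hy w with hφ
  have key : ∀ x, 0 ≤ φ x := by
    refine min_principle H hconn hE φ {y, z} ⟨y, by simp⟩ ?_ ?_
    · intro b hb
      simp only [Finset.mem_insert, Finset.mem_singleton] at hb
      rcases hb with hb | hb
      · rw [hb]
        simp only [hφ, hy0]
        have := hznn y
        have := hynn z
        linarith
      · rw [hb]
        simp only [hφ, hz0]
        linarith [hznn z]
    · intro x hx
      simp only [Finset.mem_insert, Finset.mem_singleton, not_or] at hx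
      obtain ⟨hxy, hxz⟩ := hx
      have expand : ∑ w, lazyP H x w * φ w
          = (∑ w, lazyP H x w * hz w) + hy z * (∑ w, lazyP H x w)
            - ∑ w, lazyP H x w * hy w := by
        have hterm : ∀ w, lazyP H x w * φ w
            = lazyP H x w * hz w + hy z * lazyP H x w - lazyP H x w * hy w := by
          intro w
          simp only [hφ]
          ring
        rw [Finset.sum_congr rfl fun w _ => hterm w, Finset.sum_sub_distrib,
          Finset.sum_add_distrib, ← Finset.mul_sum]
      rw [expand, P_rowsum H hconn hE, mul_one]
      have h1 := hyrec x hxy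
      have h2 := hzrec x hxz
      simp only [hφ]
      linarith
  intro x
  have := key x
  simp only [hφ] at this
  linarith

lemma commute_edge (hconn : H.Connected) (hE : (edges H).Nonempty)
    (u v : V) (hadj : H.Adj u v) (hu hv : V → ℝ)
    (hu0 : hu u = 0) (hurec : ∀ x, x ≠ u → hu x = 1 + ∑ w, lazyP H x w * hu w)
    (hunn : ∀ x, 0 ≤ hu x)
    (hv0 : hv v = 0) (hvrec : ∀ x, x ≠ v → hv x = 1 + ∑ w, lazyP H x w * hv w)
    (hvnn : ∀ x, 0 ≤ hv x) :
    hv u + hu v ≤ 4 * ((edges H).card : ℝ) := by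
  have huv : u ≠ v := H.ne_of_adj hadj
  set σ : V → ℝ := fun w => hv w - hu w with hσ
  set ψ : V → ℝ := fun w => σ u - σ w with hψ
  have hπv : 0 < statDist H v := statDist_pos H hconn hE v
  have hπu : 0 < statDist H u := statDist_pos H hconn hE u
  have expand : ∀ x, ∑ z, lazyP H x z * ψ z = σ u - ∑ z, lazyP H x z * σ z := by
    intro x
    have hterm : ∀ z, lazyP H x z * ψ z = σ u * lazyP H x z - lazyP H x z * σ z := by
      intro z
      simp only [hψ]
      ring
    rw [Finset.sum_congr rfl fun z _ => hterm z, Finset.sum_sub_distrib, ← Finset.mul_sum,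
      P_rowsum H hconn hE, mul_one]
  have expandσ : ∀ x, ∑ z, lazyP H x z * σ z
      = (∑ z, lazyP H x z * hv z) - ∑ z, lazyP H x z * hu z := by
    intro x
    rw [← Finset.sum_sub_distrib]
    exact Finset.sum_congr rfl fun z _ => by simp only [hσ]; ring
  have hkacu : ∑ w, lazyP H u w * hu w = 1 / statDist H u - 1 :=
    kac H hconn hE u hu hu0 hurec
  have hkacv : ∑ w, lazyP H v w * hv w = 1 / statDist H v - 1 :=
    kac H hconn hE v hv hv0 hvrec
  have hψnn : ∀ x, 0 ≤ ψ x := by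
    refine min_principle H hconn hE ψ {u} ⟨u, Finset.mem_singleton_self u⟩ ?_ ?_
    · intro b hb
      rw [Finset.mem_singleton] at hb
      rw [hb]
      simp [hψ]
    · intro x hx
      rw [Finset.mem_singleton] at hx
      rw [expand x]
      have hgoal : σ x ≤ ∑ z, lazyP H x z * σ z := by
        have e := expandσ x
        have r1 := hurec x hx
        by_cases hxv : x = v
        · rw [hxv] at e r1 ⊢
          rw [hkacv] at e
          have hσv : σ v = -hu v := by simp only [hσ, hv0]; ring
          have h1p : 0 < 1 / statDist H v := one_div_pos.mpr hπv
          rw [e, hσv]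
          linarith
        · have r2 := hvrec x hxv
          have hσx : σ x = hv x - hu x := by simp only [hσ]
          rw [e, hσx]
          linarith
      simp only [hψ]
      linarith
  -- final computation at u
  have hA : ∑ z, lazyP H u z * σ z = hv u - 1 / statDist H u := by
    rw [expandσ u, hkacu, hvrec u huv]
    ring
  have hsum : ∑ z, lazyP H u z * (σ u - σ z) = 1 / statDist H u := by
    have : ∀ z, lazyP H u z * (σ u - σ z) = σ u * lazyP H u z - lazyP H u z * σ z := by
      intro z
      ring
    rw [Finset.sum_congr rfl fun z _ => this z, Finset.sum_sub_distrib, ← Finset.mul_sum,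
      P_rowsum H hconn hE, mul_one, hA]
    simp only [hσ, hu0, hv0]
    ring
  have hterm_le : lazyP H u v * (σ u - σ v) ≤ 1 / statDist H u := by
    have hnn : ∀ z ∈ Finset.univ, (0:ℝ) ≤ lazyP H u z * (σ u - σ z) := by
      intro z _
      refine mul_nonneg (P_nonneg H u z) ?_
      have := hψnn z
      simp only [hψ] at this
      linarith
    rw [← hsum]
    exact Finset.single_le_sum hnn (Finset.mem_univ v)
  have hPuv : lazyP H u v = 1 / (2 * (deg H u : ℝ)) := by
    simp only [lazyP, Matrix.of_apply, if_neg huv, if_pos hadj]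
  have hdu : (0:ℝ) < deg H u := by exact_mod_cast deg_pos H hconn hE u
  have hM : (0:ℝ) < ((edges H).card : ℝ) := edges_card_pos H hE
  have hπu_eq : statDist H u = (deg H u : ℝ) / (2 * ((edges H).card : ℝ)) := rfl
  have hC : σ u - σ v = hv u + hu v := by
    simp only [hσ, hu0, hv0]
    ring
  rw [hPuv, hπu_eq, hC, one_div_div, one_div_mul_eq_div,
    div_le_div_iff₀ (by positivity) (by positivity)] at hterm_le
  nlinarith [hdu]

lemma commute_dist (hconn : H.Connected) (hE : (edges H).Nonempty)
    (hv : V → V → ℝ) (h0 : ∀ y, hv y y = 0)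
    (hrec : ∀ y x, x ≠ y → hv y x = 1 + ∑ z, lazyP H x z * hv y z)
    (hnn : ∀ y x, 0 ≤ hv y x) :
    ∀ x y : V, hv y x + hv x y ≤ 4 * ((edges H).card : ℝ) * (H.dist x y : ℝ) := by
  have walkbd : ∀ (x y : V) (p : H.Walk x y),
      hv y x + hv x y ≤ 4 * ((edges H).card : ℝ) * (p.length : ℝ) := by
    intro x y p
    induction p with
    | nil =>
      simp [h0]
    | @cons a w b hadj q ih =>
      have t1 : hv b a ≤ hv w a + hv b w :=
        hit_triangle H hconn hE b w (hv b) (hv w) (h0 b) (hrec b) (hnn b)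
          (h0 w) (hrec w) (hnn w) a
      have t2 : hv a b ≤ hv w b + hv a w :=
        hit_triangle H hconn hE a w (hv a) (hv w) (h0 a) (hrec a) (hnn a)
          (h0 w) (hrec w) (hnn w) b
      have ce : hv w a + hv a w ≤ 4 * ((edges H).card : ℝ) :=
        commute_edge H hconn hE a w hadj (hv a) (hv w) (h0 a) (hrec a) (hnn a)
          (h0 w) (hrec w) (hnn w)
      have hlen : ((SimpleGraph.Walk.cons hadj q).length : ℝ) = (q.length : ℝ) + 1 := by
        rw [SimpleGraph.Walk.length_cons]
        push_cast
        ring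
      rw [hlen]
      have := ih
      nlinarith [ih]
  intro x y
  obtain ⟨p, hp⟩ := hconn.exists_walk_length_eq_dist x y
  have := walkbd x y p
  rw [hp] at this
  exact this

lemma gamma_bound (hconn : H.Connected) (hE : (edges H).Nonempty)
    (hv : V → V → ℝ) (h0 : ∀ y, hv y y = 0)
    (hrec : ∀ y x, x ≠ y → hv y x = 1 + ∑ z, lazyP H x z * hv y z)
    (hnn : ∀ y x, 0 ≤ hv y x) :
    ∀ x : V, ∑ y, statDist H y * hv y x
      ≤ 2 * ((edges H).card : ℝ) * (graphDiam H : ℝ) := by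
  set π := statDist H with hπ
  set Γ : V → ℝ := fun x => ∑ y, π y * hv y x with hΓ
  have hharm : ∀ x, Γ x = ∑ z, lazyP H x z * Γ z := by
    intro x
    have e1 : Γ x = ∑ y ∈ Finset.univ.erase x, π y * hv y x := by
      rw [hΓ]
      simp only
      rw [← Finset.add_sum_erase _ _ (Finset.mem_univ x), h0 x, mul_zero, zero_add]
    have e2 : ∑ y ∈ Finset.univ.erase x, π y * hv y x
        = (∑ y ∈ Finset.univ.erase x, π y)
          + ∑ y ∈ Finset.univ.erase x, π y * ∑ z, lazyP H x z * hv y z := by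
      rw [← Finset.sum_add_distrib]
      refine Finset.sum_congr rfl fun y hy => ?_
      rw [hrec y x (fun h => (Finset.mem_erase.mp hy).1 h.symm)]
      ring
    have e3 : ∑ y ∈ Finset.univ.erase x, π y = 1 - π x := by
      have := Finset.add_sum_erase Finset.univ π (Finset.mem_univ x)
      have h1 := sum_statDist H hE
      rw [← hπ] at h1
      linarith
    have e4 : ∑ y, π y * ∑ z, lazyP H x z * hv y z = ∑ z, lazyP H x z * Γ z := by
      have : ∀ y, π y * ∑ z, lazyP H x z * hv y z = ∑ z, lazyP H x z * (π y * hv y z) := by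
        intro y
        rw [Finset.mul_sum]
        exact Finset.sum_congr rfl fun z _ => by ring
      rw [Finset.sum_congr rfl fun y _ => this y, Finset.sum_comm]
      refine Finset.sum_congr rfl fun z _ => ?_
      rw [hΓ]
      simp only
      rw [Finset.mul_sum]
    have e5 : ∑ y ∈ Finset.univ.erase x, π y * ∑ z, lazyP H x z * hv y z
        = (∑ z, lazyP H x z * Γ z) - π x * ∑ z, lazyP H x z * hv x z := by
      have := Finset.add_sum_erase Finset.univ (fun y => π y * ∑ z, lazyP H x z * hv y z)
        (Finset.mem_univ x)
      rw [e4] at this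
      linarith
    have hkacx : ∑ z, lazyP H x z * hv x z = 1 / π x - 1 :=
      kac H hconn hE x (hv x) (h0 x) (hrec x)
    have hπx : 0 < π x := statDist_pos H hconn hE x
    rw [e1, e2, e3, e5, hkacx]
    field_simp
    ring
  have hconst : ∀ a x, Γ a ≤ Γ x := by
    intro a
    have key : ∀ x, 0 ≤ Γ x - Γ a := by
      refine min_principle H hconn hE (fun w => Γ w - Γ a) {a}
        ⟨a, Finset.mem_singleton_self a⟩ ?_ ?_
      · intro b hb
        rw [Finset.mem_singleton] at hb
        rw [hb]
        simp
      · intro x _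
        have expand : ∑ z, lazyP H x z * (Γ z - Γ a)
            = (∑ z, lazyP H x z * Γ z) - Γ a := by
          have : ∀ z, lazyP H x z * (Γ z - Γ a)
              = lazyP H x z * Γ z - Γ a * lazyP H x z := fun z => by ring
          rw [Finset.sum_congr rfl fun z _ => this z, Finset.sum_sub_distrib,
            ← Finset.mul_sum, P_rowsum H hconn hE, mul_one]
        rw [expand, ← hharm x]
    intro x
    linarith [key x]
  have hflat : ∀ a x, Γ a = Γ x := fun a x => le_antisymm (hconst a x) (hconst x a)
  intro x
  have hmean : Γ x = ∑ b, π b * Γ b := by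
    have : ∀ b, π b * Γ b = π b * Γ x := fun b => by rw [hflat b x]
    rw [Finset.sum_congr rfl fun b _ => this b, ← Finset.sum_mul, sum_statDist H hE, one_mul]
  set M : ℝ := ((edges H).card : ℝ) with hM
  set D : ℝ := (graphDiam H : ℝ) with hD
  have hMpos : 0 < M := edges_card_pos H hE
  have hdistD : ∀ b y : V, (H.dist b y : ℝ) ≤ D := by
    intro b y
    rw [hD]
    have : H.dist b y ≤ graphDiam H :=
      Finset.le_sup (f := fun p : V × V => H.dist p.1 p.2) (Finset.mem_univ (b, y))
    exact_mod_cast this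
  have hpair : ∀ b y : V, hv y b + hv b y ≤ 4 * M * D := by
    intro b y
    have h1 := commute_dist H hconn hE hv h0 hrec hnn b y
    have h2 := hdistD b y
    nlinarith [h1, h2, hMpos]
  have hswap : ∑ b, π b * Γ b = ∑ b, ∑ y, π b * π y * hv y b := by
    refine Finset.sum_congr rfl fun b _ => ?_
    rw [hΓ]
    simp only
    rw [Finset.mul_sum]
    exact Finset.sum_congr rfl fun y _ => by ring
  have hsym : ∑ b, ∑ y, π b * π y * hv y b = ∑ b, ∑ y, π b * π y * hv b y := by
    rw [Finset.sum_comm]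
    refine Finset.sum_congr rfl fun b _ => Finset.sum_congr rfl fun y _ => by ring
  have hsum2 : (∑ b, ∑ y, π b * π y * hv y b) + (∑ b, ∑ y, π b * π y * hv b y)
      = ∑ b, ∑ y, π b * π y * (hv y b + hv b y) := by
    rw [← Finset.sum_add_distrib]
    refine Finset.sum_congr rfl fun b _ => ?_
    rw [← Finset.sum_add_distrib]
    exact Finset.sum_congr rfl fun y _ => by ring
  have hπnn : ∀ b, 0 ≤ π b := fun b => le_of_lt (statDist_pos H hconn hE b)
  have hbound : ∑ b, ∑ y, π b * π y * (hv y b + hv b y) ≤ 4 * M * D := by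
    calc ∑ b, ∑ y, π b * π y * (hv y b + hv b y)
        ≤ ∑ b, ∑ y, π b * π y * (4 * M * D) := by
          refine Finset.sum_le_sum fun b _ => Finset.sum_le_sum fun y _ => ?_
          exact mul_le_mul_of_nonneg_left (hpair b y) (mul_nonneg (hπnn b) (hπnn y))
      _ = 4 * M * D := by
          have : ∀ b, ∑ y, π b * π y * (4 * M * D) = π b * (4 * M * D) := by
            intro b
            rw [show (fun y => π b * π y * (4 * M * D))
                = fun y => (π b * (4 * M * D)) * π y by funext y; ring]
            rw [← Finset.mul_sum, sum_statDist H hE, mul_one]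
          rw [Finset.sum_congr rfl fun b _ => this b, ← Finset.sum_mul,
            sum_statDist H hE, one_mul]
  have : Γ x ≤ 2 * M * D := by
    rw [hmean, hswap]
    nlinarith [hsym, hsum2, hbound]
  rw [hΓ] at this
  exact this

def Smat {V : Type} [Fintype V] (H : SimpleGraph V) : Matrix V V ℝ :=
  Matrix.of fun a b => if a = b then 1/2
    else if H.Adj a b then 1 / (2 * Real.sqrt (deg H a) * Real.sqrt (deg H b)) else 0

lemma S_symm (a b : V) : Smat H a b = Smat H b a := by
  simp only [Smat, Matrix.of_apply]
  by_cases hab : a = b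
  · subst hab
    rfl
  · have hba : ¬ b = a := fun h => hab h.symm
    rw [if_neg hab, if_neg hba]
    by_cases hadj : H.Adj a b
    · rw [if_pos hadj, if_pos (H.adj_symm hadj)]
      ring
    · rw [if_neg hadj, if_neg (fun h => hadj (H.adj_symm h))]

lemma sqrt_deg_pos (hconn : H.Connected) (hE : (edges H).Nonempty) (a : V) :
    0 < Real.sqrt (deg H a) := by
  have : (0:ℝ) < deg H a := by exact_mod_cast deg_pos H hconn hE a
  positivity

lemma S_mulP (hconn : H.Connected) (hE : (edges H).Nonempty) (a b : V) :
    Smat H a b * Real.sqrt (deg H b) = Real.sqrt (deg H a) * lazyP H a b := by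
  have hsa := sqrt_deg_pos H hconn hE a
  have hsb := sqrt_deg_pos H hconn hE b
  have hda : (0:ℝ) < deg H a := by exact_mod_cast deg_pos H hconn hE a
  have hsq : Real.sqrt (deg H a) * Real.sqrt (deg H a) = (deg H a : ℝ) :=
    Real.mul_self_sqrt (by positivity)
  simp only [Smat, Matrix.of_apply, lazyP]
  by_cases hab : a = b
  · rw [hab]
    simp
    ring
  · rw [if_neg hab, if_neg hab]
    by_cases hadj : H.Adj a b
    · rw [if_pos hadj, if_pos hadj]
      rw [div_mul_eq_mul_div, one_mul]
      rw [eq_comm, mul_one_div, div_eq_div_iff (by positivity) (by positivity)]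
      calc Real.sqrt (deg H a) * (2 * Real.sqrt (deg H a) * Real.sqrt (deg H b))
          = 2 * (Real.sqrt (deg H a) * Real.sqrt (deg H a)) * Real.sqrt (deg H b) := by ring
        _ = 2 * (deg H a : ℝ) * Real.sqrt (deg H b) := by rw [hsq]
        _ = Real.sqrt (deg H b) * (2 * (deg H a : ℝ)) := by ring
    · rw [if_neg hadj, if_neg hadj, zero_mul, mul_zero]

lemma Spow_mulP (hconn : H.Connected) (hE : (edges H).Nonempty) (t : ℕ) (a b : V) :
    (Smat H ^ t) a b * Real.sqrt (deg H b) = Real.sqrt (deg H a) * (lazyP H ^ t) a b := by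
  induction t generalizing a b with
  | zero =>
    simp only [pow_zero, Matrix.one_apply]
    by_cases hab : a = b
    · rw [hab]
      simp
    · simp [hab]
  | succ n ih =>
    rw [pow_succ, pow_succ, Matrix.mul_apply, Matrix.mul_apply, Finset.sum_mul,
      Finset.mul_sum]
    refine Finset.sum_congr rfl fun c _ => ?_
    calc (Smat H ^ n) a c * Smat H c b * Real.sqrt (deg H b)
        = (Smat H ^ n) a c * (Smat H c b * Real.sqrt (deg H b)) := by ring
      _ = (Smat H ^ n) a c * (Real.sqrt (deg H c) * lazyP H c b) := by
          rw [S_mulP H hconn hE c b]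
      _ = ((Smat H ^ n) a c * Real.sqrt (deg H c)) * lazyP H c b := by ring
      _ = (Real.sqrt (deg H a) * (lazyP H ^ n) a c) * lazyP H c b := by rw [ih]
      _ = Real.sqrt (deg H a) * ((lazyP H ^ n) a c * lazyP H c b) := by ring

lemma Spow_symm (t : ℕ) (a b : V) : (Smat H ^ t) a b = (Smat H ^ t) b a := by
  have hS : Matrix.transpose (Smat H) = Smat H := by
    ext c d
    rw [Matrix.transpose_apply]
    exact S_symm H d c
  have h2 : Matrix.transpose (Smat H ^ t) = Smat H ^ t := by
    rw [Matrix.transpose_pow, hS]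
  conv_lhs => rw [← h2]
  rw [Matrix.transpose_apply]

lemma S_quad_nonneg (hconn : H.Connected) (hE : (edges H).Nonempty) (w : V → ℝ) :
    0 ≤ ∑ a, ∑ b, w a * Smat H a b * w b := by
  have hda : ∀ a, (0:ℝ) < deg H a := fun a => by exact_mod_cast deg_pos H hconn hE a
  have hsa : ∀ a, (0:ℝ) < Real.sqrt (deg H a) := sqrt_deg_pos H hconn hE
  set f : V → ℝ := fun a => w a / Real.sqrt (deg H a) with hf
  have hfsq : ∀ a, f a ^ 2 = w a ^ 2 / (deg H a : ℝ) := by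
    intro a
    rw [hf]
    simp only
    rw [div_pow, Real.sq_sqrt (le_of_lt (hda a))]
  have entry : ∀ a b, w a * Smat H a b * w b
      = (if a = b then w a ^ 2 / 2 else 0)
        + (if H.Adj a b then w a * w b / (2 * Real.sqrt (deg H a) * Real.sqrt (deg H b)) else 0) := by
    intro a b
    simp only [Smat, Matrix.of_apply]
    by_cases hab : a = b
    · subst hab
      rw [if_pos rfl, if_pos rfl, if_neg (H.loopless.irrefl a)]
      ring
    · rw [if_neg hab, if_neg hab]
      by_cases hadj : H.Adj a b
      · rw [if_pos hadj, if_pos hadj]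
        ring
      · rw [if_neg hadj, if_neg hadj]
        ring
  set CR : ℝ := ∑ a, ∑ b,
    (if H.Adj a b then w a * w b / (2 * Real.sqrt (deg H a) * Real.sqrt (deg H b)) else 0) with hCR
  have hQ : ∑ a, ∑ b, w a * Smat H a b * w b = (∑ a, w a ^ 2) / 2 + CR := by
    rw [show (fun a => ∑ b, w a * Smat H a b * w b)
        = fun a => (∑ b, (if a = b then w a ^ 2 / 2 else 0))
          + ∑ b, (if H.Adj a b then w a * w b / (2 * Real.sqrt (deg H a) * Real.sqrt (deg H b)) else 0) by
      funext a
      rw [← Finset.sum_add_distrib]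
      exact Finset.sum_congr rfl fun b _ => entry a b]
    rw [Finset.sum_add_distrib, hCR]
    congr 1
    rw [Finset.sum_div]
    exact Finset.sum_congr rfl fun a _ => by
      rw [Finset.sum_ite_eq Finset.univ a (fun _ => w a ^ 2 / 2), if_pos (Finset.mem_univ a)]
  have inner1 : ∀ a, ∑ b, (if H.Adj a b then f a ^ 2 else 0) = w a ^ 2 := by
    intro a
    rw [← Finset.sum_filter, Finset.sum_const]
    rw [show (Finset.univ.filter fun b => H.Adj a b).card = deg H a from rfl, nsmul_eq_mul,
      hfsq a]
    rw [mul_div_assoc', mul_comm, mul_div_assoc, div_self (ne_of_gt (hda a)), mul_one]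
  have S1 : ∑ a, ∑ b, (if H.Adj a b then f a ^ 2 else 0) = ∑ a, w a ^ 2 :=
    Finset.sum_congr rfl fun a _ => inner1 a
  have S2 : ∑ a, ∑ b, (if H.Adj a b then f b ^ 2 else 0) = ∑ a, w a ^ 2 := by
    rw [Finset.sum_comm]
    refine Finset.sum_congr rfl fun b _ => ?_
    rw [show (fun a => if H.Adj a b then f b ^ 2 else 0)
        = fun a => if H.Adj b a then f b ^ 2 else 0 by
      funext a
      by_cases h : H.Adj a b
      · rw [if_pos h, if_pos (H.adj_symm h)]
      · rw [if_neg h, if_neg (fun hh => h (H.adj_symm hh))]]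
    exact inner1 b
  have S3 : ∑ a, ∑ b, (if H.Adj a b then 2 * f a * f b else 0) = 4 * CR := by
    rw [hCR, Finset.mul_sum]
    refine Finset.sum_congr rfl fun a _ => ?_
    rw [Finset.mul_sum]
    refine Finset.sum_congr rfl fun b _ => ?_
    by_cases h : H.Adj a b
    · rw [if_pos h, if_pos h]
      have hfa : f a = w a / Real.sqrt (deg H a) := rfl
      have hfb : f b = w b / Real.sqrt (deg H b) := rfl
      rw [hfa, hfb]
      have h1 := (hsa a).ne'
      have h2 := (hsa b).ne'
      field_simp
      ring
    · rw [if_neg h, if_neg h]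
      ring
  set T : ℝ := ∑ a, ∑ b, (if H.Adj a b then (f a + f b) ^ 2 else 0) with hT
  have hTnn : 0 ≤ T := by
    rw [hT]
    refine Finset.sum_nonneg fun a _ => Finset.sum_nonneg fun b _ => ?_
    by_cases h : H.Adj a b
    · rw [if_pos h]
      positivity
    · rw [if_neg h]
  have hTsplit : T = (∑ a, ∑ b, (if H.Adj a b then f a ^ 2 else 0))
      + (∑ a, ∑ b, (if H.Adj a b then f b ^ 2 else 0))
      + (∑ a, ∑ b, (if H.Adj a b then 2 * f a * f b else 0)) := by
    rw [hT, ← Finset.sum_add_distrib, ← Finset.sum_add_distrib]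
    refine Finset.sum_congr rfl fun a _ => ?_
    rw [← Finset.sum_add_distrib, ← Finset.sum_add_distrib]
    refine Finset.sum_congr rfl fun b _ => ?_
    by_cases h : H.Adj a b
    · rw [if_pos h, if_pos h, if_pos h, if_pos h]
      ring
    · rw [if_neg h, if_neg h, if_neg h, if_neg h]
      ring
  rw [hQ]
  linarith [hTsplit, S1, S2, S3, hTnn]

lemma nu_eq (hconn : H.Connected) (hE : (edges H).Nonempty) (a : V) :
    Real.sqrt (statDist H a)
      = Real.sqrt (deg H a) / Real.sqrt (2 * ((edges H).card : ℝ)) := by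
  rw [statDist, Real.sqrt_div (by positivity)]

lemma S_nu (hconn : H.Connected) (hE : (edges H).Nonempty) (a : V) :
    ∑ b, Smat H a b * Real.sqrt (statDist H b) = Real.sqrt (statDist H a) := by
  have hsa := sqrt_deg_pos H hconn hE
  have hM : (0:ℝ) < 2 * ((edges H).card : ℝ) := by
    have := edges_card_pos H hE
    linarith
  have hsM : 0 < Real.sqrt (2 * ((edges H).card : ℝ)) := Real.sqrt_pos.mpr hM
  have entry : ∀ b, Smat H a b * Real.sqrt (statDist H b)
      = (if b = a then Real.sqrt (statDist H a) / 2 else 0)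
        + (if H.Adj a b then 1 / (2 * Real.sqrt (deg H a) * Real.sqrt (2 * ((edges H).card : ℝ))) else 0) := by
    intro b
    simp only [Smat, Matrix.of_apply]
    by_cases hab : a = b
    · subst hab
      rw [if_pos rfl, if_pos rfl, if_neg (H.loopless.irrefl a)]
      ring
    · have hba : ¬ b = a := fun h => hab h.symm
      rw [if_neg hab, if_neg hba]
      by_cases hadj : H.Adj a b
      · rw [if_pos hadj, if_pos hadj, nu_eq H hconn hE b]
        have ha' := hsa a
        have hb' := hsa b
        rw [div_mul_div_comm, one_mul, zero_add,
          div_eq_div_iff (by positivity) (by positivity)]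
        nlinarith [Real.mul_self_sqrt (le_of_lt (Nat.cast_pos.mpr (deg_pos H hconn hE b) : (0:ℝ) < deg H b))]
      · rw [if_neg hadj, if_neg hadj, zero_mul, add_zero]
  rw [Finset.sum_congr rfl fun b _ => entry b, Finset.sum_add_distrib,
    Finset.sum_ite_eq' Finset.univ a (fun _ => Real.sqrt (statDist H a) / 2)]
  rw [if_pos (Finset.mem_univ a), ← Finset.sum_filter, Finset.sum_const,
    show (Finset.univ.filter fun b => H.Adj a b).card = deg H a from rfl, nsmul_eq_mul]
  rw [nu_eq H hconn hE a]
  have hda : Real.sqrt (deg H a) * Real.sqrt (deg H a) = (deg H a : ℝ) :=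
    Real.mul_self_sqrt (by positivity)
  have hsa' := hsa a
  rw [eq_comm, ← sub_eq_iff_eq_add']
  have lhs : Real.sqrt (deg H a) / Real.sqrt (2 * ((edges H).card : ℝ))
      - Real.sqrt (deg H a) / Real.sqrt (2 * ((edges H).card : ℝ)) / 2
      = Real.sqrt (deg H a) / (2 * Real.sqrt (2 * ((edges H).card : ℝ))) := by
    field_simp
    ring
  rw [lhs, mul_one_div, div_eq_div_iff (by positivity) (by positivity)]
  nlinarith [hda]

lemma Spow_nu (hconn : H.Connected) (hE : (edges H).Nonempty) (t : ℕ) (a : V) :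
    ∑ b, (Smat H ^ t) a b * Real.sqrt (statDist H b) = Real.sqrt (statDist H a) := by
  induction t generalizing a with
  | zero =>
    simp only [pow_zero, Matrix.one_apply]
    rw [Finset.sum_congr rfl fun b _ => by
      rw [show ((if a = b then (1:ℝ) else 0) * Real.sqrt (statDist H b))
          = (if b = a then Real.sqrt (statDist H b) else 0) by
        by_cases h : a = b
        · rw [if_pos h, if_pos h.symm, one_mul]
        · rw [if_neg h, if_neg (fun hh => h hh.symm), zero_mul]]]
    rw [Finset.sum_ite_eq' Finset.univ a (fun b => Real.sqrt (statDist H b)),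
      if_pos (Finset.mem_univ a)]
  | succ n ih =>
    have expand : ∀ b, (Smat H ^ (n+1)) a b * Real.sqrt (statDist H b)
        = ∑ c, (Smat H ^ n) a c * (Smat H c b * Real.sqrt (statDist H b)) := by
      intro b
      rw [pow_succ, Matrix.mul_apply, Finset.sum_mul]
      exact Finset.sum_congr rfl fun c _ => by ring
    rw [Finset.sum_congr rfl fun b _ => expand b, Finset.sum_comm]
    rw [Finset.sum_congr rfl fun c _ => by
      rw [← Finset.mul_sum, S_nu H hconn hE c]]
    exact ih a

lemma quad_mul_split (X Y : Matrix V V ℝ) (w : V → ℝ) :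
    ∑ a, ∑ b, w a * (X * Y) a b * w b
      = ∑ c, (∑ a, w a * X a c) * (∑ b, Y c b * w b) := by
  have step1 : ∀ a b, w a * (X * Y) a b * w b
      = ∑ c, (w a * X a c) * (Y c b * w b) := by
    intro a b
    rw [Matrix.mul_apply, Finset.mul_sum, Finset.sum_mul]
    exact Finset.sum_congr rfl fun c _ => by ring
  rw [Finset.sum_congr rfl fun a _ => Finset.sum_congr rfl fun b _ => step1 a b]
  rw [Finset.sum_congr rfl fun a (_ : a ∈ Finset.univ) => Finset.sum_comm]
  rw [Finset.sum_congr rfl fun a (_ : a ∈ Finset.univ) =>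
    Finset.sum_congr rfl fun c (_ : c ∈ Finset.univ) =>
      (Finset.mul_sum Finset.univ (fun b => Y c b * w b) (w a * X a c)).symm]
  rw [Finset.sum_comm]
  exact Finset.sum_congr rfl fun c _ => (Finset.sum_mul _ _ _).symm

lemma row_u (s : ℕ) (w : V → ℝ) (c : V) :
    ∑ b, (Smat H ^ s) c b * w b = ∑ a, w a * (Smat H ^ s) a c := by
  refine Finset.sum_congr rfl fun b _ => ?_
  rw [Spow_symm H s c b]
  ring

lemma Spow_quad_nonneg (hconn : H.Connected) (hE : (edges H).Nonempty) (t : ℕ) (w : V → ℝ) :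
    0 ≤ ∑ a, ∑ b, w a * (Smat H ^ t) a b * w b := by
  set u : V → ℝ := fun c => ∑ a, w a * (Smat H ^ (t/2)) a c with hu
  rcases Nat.even_or_odd t with he | ho
  · obtain ⟨s, hs⟩ := he
    have hts : t = s + s := hs
    have hsplit : Smat H ^ t = (Smat H ^ s) * (Smat H ^ s) := by
      rw [hts, pow_add]
    rw [hsplit, quad_mul_split]
    refine Finset.sum_nonneg fun c _ => ?_
    rw [row_u H s w c]
    exact mul_self_nonneg _
  · obtain ⟨s, hs⟩ := ho
    have hsplit : Smat H ^ t = (Smat H ^ s) * (Smat H * Smat H ^ s) := by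
      rw [hs]
      rw [← pow_succ', ← pow_add]
      congr 1
      ring
    rw [hsplit, quad_mul_split]
    have inner : ∀ c, ∑ b, (Smat H * Smat H ^ s) c b * w b
        = ∑ d, Smat H c d * (∑ a, w a * (Smat H ^ s) a d) := by
      intro c
      have : ∀ b, (Smat H * Smat H ^ s) c b * w b
          = ∑ d, Smat H c d * ((Smat H ^ s) d b * w b) := by
        intro b
        rw [Matrix.mul_apply, Finset.sum_mul]
        exact Finset.sum_congr rfl fun d _ => by ring
      rw [Finset.sum_congr rfl fun b _ => this b, Finset.sum_comm]
      refine Finset.sum_congr rfl fun d _ => ?_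
      rw [← Finset.mul_sum, row_u H s w d]
    rw [Finset.sum_congr rfl fun c _ => by rw [inner c]]
    have reshape : ∀ c, (∑ a, w a * (Smat H ^ s) a c) * (∑ d, Smat H c d * (∑ a, w a * (Smat H ^ s) a d))
        = ∑ d, (∑ a, w a * (Smat H ^ s) a c) * Smat H c d * (∑ a, w a * (Smat H ^ s) a d) := by
      intro c
      rw [Finset.mul_sum]
      exact Finset.sum_congr rfl fun d _ => by ring
    rw [Finset.sum_congr rfl fun c _ => reshape c]
    exact S_quad_nonneg H hconn hE (fun c => ∑ a, w a * (Smat H ^ s) a c)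

lemma pull_const (k : ℝ) (F : V → V → ℝ) :
    ∑ a, ∑ b, k * F a b = k * ∑ a, ∑ b, F a b := by
  rw [Finset.mul_sum]
  exact Finset.sum_congr rfl fun a _ => by rw [Finset.mul_sum]

lemma Spow_quad_ge (hconn : H.Connected) (hE : (edges H).Nonempty) (t : ℕ) (w : V → ℝ) :
    (∑ a, w a * Real.sqrt (statDist H a)) ^ 2
      ≤ ∑ a, ∑ b, w a * (Smat H ^ t) a b * w b := by
  set ν : V → ℝ := fun a => Real.sqrt (statDist H a) with hν
  set c : ℝ := ∑ a, w a * ν a with hc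
  set r : V → ℝ := fun a => w a - c * ν a with hr
  have hwa : ∀ a, w a = c * ν a + r a := by
    intro a
    simp only [hr]
    ring
  have hν2 : ∀ a, ν a * ν a = statDist H a := by
    intro a
    exact Real.mul_self_sqrt (le_of_lt (statDist_pos H hconn hE a))
  have hνsum : ∑ a, ν a * ν a = 1 := by
    rw [Finset.sum_congr rfl fun a _ => hν2 a]
    exact sum_statDist H hE
  have hrν : ∑ a, r a * ν a = 0 := by
    have : ∀ a, r a * ν a = w a * ν a - c * (ν a * ν a) := by
      intro a
      simp only [hr]
      ring
    rw [Finset.sum_congr rfl fun a _ => this a, Finset.sum_sub_distrib, ← Finset.mul_sum,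
      hνsum, mul_one, ← hc, sub_self]
  have hA1 : ∑ a, ∑ b, ν a * (Smat H ^ t) a b * ν b = 1 := by
    have inner : ∀ a, ∑ b, ν a * (Smat H ^ t) a b * ν b = ν a * ν a := by
      intro a
      rw [show (fun b => ν a * (Smat H ^ t) a b * ν b)
          = fun b => ν a * ((Smat H ^ t) a b * ν b) by funext b; ring]
      rw [← Finset.mul_sum, Spow_nu H hconn hE t a]
    rw [Finset.sum_congr rfl fun a _ => inner a, hνsum]
  have hA2 : ∑ a, ∑ b, r a * (Smat H ^ t) a b * ν b = 0 := by
    have inner : ∀ a, ∑ b, r a * (Smat H ^ t) a b * ν b = r a * ν a := by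
      intro a
      rw [show (fun b => r a * (Smat H ^ t) a b * ν b)
          = fun b => r a * ((Smat H ^ t) a b * ν b) by funext b; ring]
      rw [← Finset.mul_sum, Spow_nu H hconn hE t a]
    rw [Finset.sum_congr rfl fun a _ => inner a, hrν]
  have hA3 : ∑ a, ∑ b, ν a * (Smat H ^ t) a b * r b = 0 := by
    rw [Finset.sum_comm]
    have inner : ∀ b, ∑ a, ν a * (Smat H ^ t) a b * r b = ν b * r b := by
      intro b
      have hcol : ∀ a, ν a * (Smat H ^ t) a b * r b
          = ((Smat H ^ t) b a * ν a) * r b := by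
        intro a
        rw [Spow_symm H t a b]
        ring
      rw [Finset.sum_congr rfl fun a _ => hcol a, ← Finset.sum_mul,
        Spow_nu H hconn hE t b]
    rw [Finset.sum_congr rfl fun b _ => inner b]
    have : ∀ b, ν b * r b = r b * ν b := fun b => by ring
    rw [Finset.sum_congr rfl fun b _ => this b, hrν]
  have hA4 : 0 ≤ ∑ a, ∑ b, r a * (Smat H ^ t) a b * r b :=
    Spow_quad_nonneg H hconn hE t r
  have split : ∀ a b, w a * (Smat H ^ t) a b * w b
      = c * c * (ν a * (Smat H ^ t) a b * ν b)
        + c * (ν a * (Smat H ^ t) a b * r b)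
        + c * (r a * (Smat H ^ t) a b * ν b)
        + r a * (Smat H ^ t) a b * r b := by
    intro a b
    rw [hwa a, hwa b]
    ring
  have hsum4 : ∑ a, ∑ b, w a * (Smat H ^ t) a b * w b
      = (∑ a, ∑ b, c * c * (ν a * (Smat H ^ t) a b * ν b))
        + (∑ a, ∑ b, c * (ν a * (Smat H ^ t) a b * r b))
        + (∑ a, ∑ b, c * (r a * (Smat H ^ t) a b * ν b))
        + ∑ a, ∑ b, r a * (Smat H ^ t) a b * r b := by
    rw [Finset.sum_congr rfl fun a (_ : a ∈ Finset.univ) =>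
      Finset.sum_congr rfl fun b (_ : b ∈ Finset.univ) => split a b]
    rw [Finset.sum_congr rfl fun a (_ : a ∈ Finset.univ) => by
      rw [Finset.sum_add_distrib, Finset.sum_add_distrib, Finset.sum_add_distrib]]
    rw [Finset.sum_add_distrib, Finset.sum_add_distrib, Finset.sum_add_distrib]
  rw [hsum4, pull_const, pull_const, pull_const, hA1, hA2, hA3]
  have : (∑ a, w a * ν a) ^ 2 = c * c := by
    rw [← hc]
    ring
  rw [this]
  linarith

lemma diag_ge (hconn : H.Connected) (hE : (edges H).Nonempty) (t : ℕ) (y : V) :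
    statDist H y ≤ (lazyP H ^ t) y y := by
  set w : V → ℝ := fun a => if a = y then (1:ℝ) else 0 with hw
  have hc : ∑ a, w a * Real.sqrt (statDist H a) = Real.sqrt (statDist H y) := by
    have : ∀ a, w a * Real.sqrt (statDist H a)
        = if a = y then Real.sqrt (statDist H a) else 0 := by
      intro a
      simp only [hw]
      by_cases h : a = y
      · rw [if_pos h, if_pos h, one_mul]
      · rw [if_neg h, if_neg h, zero_mul]
    rw [Finset.sum_congr rfl fun a _ => this a,
      Finset.sum_ite_eq' Finset.univ y (fun a => Real.sqrt (statDist H a)),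
      if_pos (Finset.mem_univ y)]
  have hQ : ∑ a, ∑ b, w a * (Smat H ^ t) a b * w b = (Smat H ^ t) y y := by
    have inner : ∀ a, ∑ b, w a * (Smat H ^ t) a b * w b = w a * (Smat H ^ t) a y := by
      intro a
      have : ∀ b, w a * (Smat H ^ t) a b * w b
          = if b = y then w a * (Smat H ^ t) a b else 0 := by
        intro b
        simp only [hw]
        by_cases h : b = y
        · rw [if_pos h, if_pos h, mul_one]
        · rw [if_neg h, if_neg h, mul_zero]
      rw [Finset.sum_congr rfl fun b _ => this b,
        Finset.sum_ite_eq' Finset.univ y (fun b => w a * (Smat H ^ t) a b),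
        if_pos (Finset.mem_univ y)]
    rw [Finset.sum_congr rfl fun a _ => inner a]
    have : ∀ a, w a * (Smat H ^ t) a y = if a = y then (Smat H ^ t) a y else 0 := by
      intro a
      simp only [hw]
      by_cases h : a = y
      · rw [if_pos h, if_pos h, one_mul]
      · rw [if_neg h, if_neg h, zero_mul]
    rw [Finset.sum_congr rfl fun a _ => this a,
      Finset.sum_ite_eq' Finset.univ y (fun a => (Smat H ^ t) a y),
      if_pos (Finset.mem_univ y)]
  have hge := Spow_quad_ge H hconn hE t w
  rw [hc, hQ] at hge
  have hsq : Real.sqrt (statDist H y) ^ 2 = statDist H y :=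
    Real.sq_sqrt (le_of_lt (statDist_pos H hconn hE y))
  rw [hsq] at hge
  have hSP := Spow_mulP H hconn hE t y y
  have hsy : 0 < Real.sqrt (deg H y) := sqrt_deg_pos H hconn hE y
  have : (Smat H ^ t) y y = (lazyP H ^ t) y y := by
    have h2 : (Smat H ^ t) y y * Real.sqrt (deg H y)
        = (lazyP H ^ t) y y * Real.sqrt (deg H y) := by
      rw [hSP]
      ring
    exact mul_right_cancel₀ (ne_of_gt hsy) h2
  rw [this] at hge
  exact hge

def Qmat {V : Type} [Fintype V] (H : SimpleGraph V) (y : V) : Matrix V V ℝ :=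
  Matrix.of fun a b => if b = y then 0 else lazyP H a b

def gvec {V : Type} [Fintype V] (H : SimpleGraph V) (y : V) (t : ℕ) : V → ℝ :=
  (Qmat H y ^ t).mulVec (fun _ => 1)

lemma Q_nonneg (y : V) (a b : V) : 0 ≤ Qmat H y a b := by
  simp only [Qmat, Matrix.of_apply]
  split
  · exact le_refl 0
  · exact P_nonneg H a b

lemma g_zero (y x : V) : gvec H y 0 x = 1 := by
  simp [gvec, Matrix.one_mulVec]

lemma g_succ (y : V) (t : ℕ) (x : V) :
    gvec H y (t+1) x = ∑ z, Qmat H y x z * gvec H y t z := by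
  rw [gvec, gvec, pow_succ', ← Matrix.mulVec_mulVec]
  rfl

lemma g_nonneg (y : V) (t : ℕ) (x : V) : 0 ≤ gvec H y t x := by
  induction t generalizing x with
  | zero =>
    rw [g_zero]
    norm_num
  | succ n ih =>
    rw [g_succ]
    exact Finset.sum_nonneg fun z _ => mul_nonneg (Q_nonneg H y x z) (ih z)

lemma Q_rowsum_le (hconn : H.Connected) (hE : (edges H).Nonempty) (y x : V) :
    ∑ z, Qmat H y x z ≤ 1 := by
  rw [← P_rowsum H hconn hE x]
  refine Finset.sum_le_sum fun z _ => ?_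
  simp only [Qmat, Matrix.of_apply]
  split
  · exact P_nonneg H x z
  · exact le_refl _

lemma g_mono (hconn : H.Connected) (hE : (edges H).Nonempty) (y : V) (t : ℕ) (x : V) :
    gvec H y (t+1) x ≤ gvec H y t x := by
  induction t generalizing x with
  | zero =>
    rw [g_succ, g_zero]
    calc ∑ z, Qmat H y x z * gvec H y 0 z = ∑ z, Qmat H y x z := by
          refine Finset.sum_congr rfl fun z _ => by rw [g_zero, mul_one]
      _ ≤ 1 := Q_rowsum_le H hconn hE y x
  | succ n ih =>
    rw [g_succ, g_succ]
    exact Finset.sum_le_sum fun z _ => mul_le_mul_of_nonneg_left (ih z) (Q_nonneg H y x z)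

lemma g_anti (hconn : H.Connected) (hE : (edges H).Nonempty) (y : V) {s t : ℕ}
    (hst : s ≤ t) (x : V) : gvec H y t x ≤ gvec H y s x := by
  induction t with
  | zero =>
    rw [Nat.le_zero.mp hst]
  | succ n ih =>
    rcases Nat.lt_or_ge s (n+1) with h | h
    · exact le_trans (g_mono H hconn hE y n x) (ih (Nat.lt_succ_iff.mp h))
    · rw [le_antisymm hst h]

lemma first_passage (hconn : H.Connected) (hE : (edges H).Nonempty) (y : V) (t : ℕ) (x : V) :
    statDist H y * (1 - gvec H y t x) ≤ (lazyP H ^ t) x y := by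
  induction t generalizing x with
  | zero =>
    rw [g_zero, sub_self, mul_zero]
    exact powP_nonneg H 0 x y
  | succ n ih =>
    have hexp : (lazyP H ^ (n+1)) x y = ∑ z, lazyP H x z * (lazyP H ^ n) z y := by
      rw [pow_succ', Matrix.mul_apply]
    rw [hexp]
    have hlb : ∀ z, lazyP H x z * (statDist H y * (1 - (if z = y then 0 else gvec H y n z)))
        ≤ lazyP H x z * (lazyP H ^ n) z y := by
      intro z
      refine mul_le_mul_of_nonneg_left ?_ (P_nonneg H x z)
      by_cases hz : z = y
      · rw [if_pos hz, sub_zero, mul_one, hz]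
        exact diag_ge H hconn hE n y
      · rw [if_neg hz]
        exact ih z
    calc statDist H y * (1 - gvec H y (n+1) x)
        = ∑ z, lazyP H x z * (statDist H y * (1 - (if z = y then 0 else gvec H y n z))) := by
          have expand : ∀ z, lazyP H x z * (statDist H y * (1 - (if z = y then 0 else gvec H y n z)))
              = statDist H y * lazyP H x z
                - statDist H y * (Qmat H y x z * gvec H y n z) := by
            intro z
            simp only [Qmat, Matrix.of_apply]
            by_cases hz : z = y
            · rw [if_pos hz, if_pos hz]
              ring
            · rw [if_neg hz, if_neg hz]
              ring
          rw [Finset.sum_congr rfl fun z _ => expand z, Finset.sum_sub_distrib,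
            ← Finset.mul_sum, ← Finset.mul_sum, P_rowsum H hconn hE, mul_one,
            ← g_succ H y n x]
          ring
      _ ≤ ∑ z, lazyP H x z * (lazyP H ^ n) z y := Finset.sum_le_sum fun z _ => hlb z

lemma partial_sum_le (hconn : H.Connected) (hE : (edges H).Nonempty) (y : V) (h : V → ℝ)
    (hy0 : h y = 0) (hrec : ∀ x, x ≠ y → h x = 1 + ∑ z, lazyP H x z * h z)
    (hnn : ∀ x, 0 ≤ h x) :
    ∀ (T : ℕ) (x : V), x ≠ y → ∑ s ∈ Finset.range T, gvec H y s x ≤ h x := by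
  intro T
  induction T with
  | zero =>
    intro x _
    rw [Finset.sum_range_zero]
    exact hnn x
  | succ n ih =>
    intro x hx
    rw [Finset.sum_range_succ']
    have hstep : ∀ s, gvec H y (s+1) x = ∑ z, Qmat H y x z * gvec H y s z :=
      fun s => g_succ H y s x
    rw [Finset.sum_congr rfl fun s _ => hstep s, Finset.sum_comm, g_zero]
    have hswap : ∑ z, ∑ s ∈ Finset.range n, Qmat H y x z * gvec H y s z
        = ∑ z, Qmat H y x z * ∑ s ∈ Finset.range n, gvec H y s z := by
      exact Finset.sum_congr rfl fun z _ => (Finset.mul_sum _ _ _).symm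
    rw [hswap]
    have hbound : ∑ z, Qmat H y x z * ∑ s ∈ Finset.range n, gvec H y s z
        ≤ ∑ z, Qmat H y x z * h z := by
      refine Finset.sum_le_sum fun z _ => ?_
      by_cases hz : z = y
      · rw [hz, show Qmat H y x y = (0:ℝ) from by simp [Qmat], zero_mul, zero_mul]
      · exact mul_le_mul_of_nonneg_left (ih z hz) (Q_nonneg H y x z)
    have hQh : ∑ z, Qmat H y x z * h z = ∑ z, lazyP H x z * h z := by
      refine Finset.sum_congr rfl fun z _ => ?_
      by_cases hz : z = y
      · rw [hz, show Qmat H y x y = (0:ℝ) from by simp [Qmat], hy0, zero_mul, mul_zero]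
      · simp only [Qmat, Matrix.of_apply, if_neg hz]
    rw [hrec x hx]
    linarith [hbound, hQh.symm ▸ hbound]

theorem aux_mixingTime_le (hconn : H.Connected) (hE : (edges H).Nonempty) :
    mixingTime H ≤ 8 * graphDiam H * (edges H).card := by
  set t₀ : ℕ := 8 * graphDiam H * (edges H).card with ht₀
  have key : ∀ i : V, tvDist (fun v => (lazyP H ^ t₀) i v) (statDist H) < (Real.exp 1)⁻¹ := by
    intro i
    have hex := fun y => exists_hit H hconn hE y
    choose hvf hv0 hvrec hvnn using hex
    set π := statDist H with hπ
    set μ : V → ℝ := fun v => (lazyP H ^ t₀) i v with hμ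
    have hMn : 0 < (edges H).card := Finset.card_pos.mpr hE
    have hM : (0:ℝ) < ((edges H).card : ℝ) := by exact_mod_cast hMn
    have hDn : 1 ≤ graphDiam H := by
      obtain ⟨e, he⟩ := hE
      rw [edges, Finset.mem_filter] at he
      induction e with
      | h a b =>
        have hab : H.Adj a b := he.2
        have h1 : H.dist a b = 1 := SimpleGraph.dist_eq_one_iff_adj.mpr hab
        have h2 : H.dist a b ≤ graphDiam H :=
          Finset.le_sup (f := fun p : V × V => H.dist p.1 p.2) (Finset.mem_univ (a, b))
        omega
    have hD : (1:ℝ) ≤ (graphDiam H : ℝ) := by exact_mod_cast hDn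
    have ht₀n : 0 < t₀ := by
      rw [ht₀]
      positivity
    have ht₀R : (0:ℝ) < (t₀ : ℝ) := by exact_mod_cast ht₀n
    set c : V → ℝ := fun y => π y * hvf y i / (t₀ : ℝ) with hcdef
    have hπnn : ∀ y, 0 ≤ π y := fun y => le_of_lt (statDist_pos H hconn hE y)
    have hc_nn : ∀ y, 0 ≤ c y := by
      intro y
      rw [hcdef]
      have := hvnn y i
      have := hπnn y
      positivity
    have hd_le : ∀ y, π y - μ y ≤ c y := by
      intro y
      by_cases hy : y = i
      · rw [hy]
        have h1 : statDist H i ≤ (lazyP H ^ t₀) i i := diag_ge H hconn hE t₀ i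
        have h2 := hc_nn i
        rw [hμ]
        simp only
        have hπi : π i = statDist H i := rfl
        rw [hπi]
        linarith
      · have hfp := first_passage H hconn hE y t₀ i
        have hpart := partial_sum_le H hconn hE y (hvf y) (hv0 y) (hvrec y) (hvnn y) t₀ i
          (fun h => hy h.symm)
        have hmono : (t₀ : ℝ) * gvec H y t₀ i ≤ ∑ s ∈ Finset.range t₀, gvec H y s i := by
          have : ∀ s ∈ Finset.range t₀, gvec H y t₀ i ≤ gvec H y s i := by
            intro s hs
            exact g_anti H hconn hE y (le_of_lt (Finset.mem_range.mp hs)) i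
          calc (t₀ : ℝ) * gvec H y t₀ i = ∑ _s ∈ Finset.range t₀, gvec H y t₀ i := by
                rw [Finset.sum_const, Finset.card_range, nsmul_eq_mul]
            _ ≤ ∑ s ∈ Finset.range t₀, gvec H y s i := Finset.sum_le_sum this
        have hgle : gvec H y t₀ i ≤ hvf y i / (t₀ : ℝ) := by
          rw [le_div_iff₀ ht₀R]
          calc gvec H y t₀ i * (t₀:ℝ) = (t₀:ℝ) * gvec H y t₀ i := by ring
            _ ≤ ∑ s ∈ Finset.range t₀, gvec H y s i := hmono
            _ ≤ hvf y i := hpart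
        have : π y - μ y ≤ π y * gvec H y t₀ i := by
          rw [hμ]
          simp only
          nlinarith [hfp, hπnn y]
        calc π y - μ y ≤ π y * gvec H y t₀ i := this
          _ ≤ π y * (hvf y i / (t₀:ℝ)) := mul_le_mul_of_nonneg_left hgle (hπnn y)
          _ = c y := by rw [hcdef]; ring
    have hsum_c : ∑ y, c y ≤ 1/4 := by
      have hΓ := gamma_bound H hconn hE hvf hv0 (fun y x hx => hvrec y x hx) (fun y x => hvnn y x) i
      have heq : ∑ y, c y = (∑ y, π y * hvf y i) / (t₀ : ℝ) := by
        rw [hcdef, Finset.sum_div]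
      rw [heq]
      rw [div_le_iff₀ ht₀R]
      have ht₀cast : (t₀ : ℝ) = 8 * (graphDiam H : ℝ) * ((edges H).card : ℝ) := by
        rw [ht₀]
        push_cast
        ring
      rw [ht₀cast]
      calc ∑ y, π y * hvf y i ≤ 2 * ((edges H).card : ℝ) * (graphDiam H : ℝ) := hΓ
        _ = 1/4 * (8 * (graphDiam H : ℝ) * ((edges H).card : ℝ)) := by ring
    have hμsum : ∑ y, μ y = 1 := powP_rowsum H hconn hE t₀ i
    have hπsum : ∑ y, π y = 1 := sum_statDist H hE
    have habs : ∀ A : Finset V, |∑ v ∈ A, μ v - ∑ v ∈ A, π v| ≤ 1/4 := by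
      intro A
      have h1 : ∑ v ∈ A, π v - ∑ v ∈ A, μ v ≤ 1/4 := by
        have : ∑ v ∈ A, π v - ∑ v ∈ A, μ v = ∑ v ∈ A, (π v - μ v) := by
          rw [Finset.sum_sub_distrib]
        rw [this]
        calc ∑ v ∈ A, (π v - μ v) ≤ ∑ v ∈ A, c v := Finset.sum_le_sum fun v _ => hd_le v
          _ ≤ ∑ v, c v := Finset.sum_le_sum_of_subset_of_nonneg (Finset.subset_univ A)
              (fun v _ _ => hc_nn v)
          _ ≤ 1/4 := hsum_c
      have h2 : ∑ v ∈ A, μ v - ∑ v ∈ A, π v ≤ 1/4 := by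
        have hcompl_μ : ∑ v ∈ A, μ v + ∑ v ∈ Aᶜ, μ v = 1 := by
          rw [Finset.sum_add_sum_compl, hμsum]
        have hcompl_π : ∑ v ∈ A, π v + ∑ v ∈ Aᶜ, π v = 1 := by
          rw [Finset.sum_add_sum_compl, hπsum]
        have : ∑ v ∈ A, μ v - ∑ v ∈ A, π v = ∑ v ∈ Aᶜ, (π v - μ v) := by
          rw [Finset.sum_sub_distrib]
          linarith
        rw [this]
        calc ∑ v ∈ Aᶜ, (π v - μ v) ≤ ∑ v ∈ Aᶜ, c v := Finset.sum_le_sum fun v _ => hd_le v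
          _ ≤ ∑ v, c v := Finset.sum_le_sum_of_subset_of_nonneg (Finset.subset_univ Aᶜ)
              (fun v _ _ => hc_nn v)
          _ ≤ 1/4 := hsum_c
      rw [abs_le]
      constructor <;> linarith
    have htv : tvDist μ π ≤ 1/4 := by
      rw [tvDist]
      exact ciSup_le habs
    have hqe : (1:ℝ)/4 < (Real.exp 1)⁻¹ := by
      have h4 : Real.exp 1 < 4 := lt_trans Real.exp_one_lt_d9 (by norm_num)
      rw [show ((Real.exp 1)⁻¹ : ℝ) = 1 / Real.exp 1 by rw [one_div]]
      exact one_div_lt_one_div_of_lt (Real.exp_pos 1) h4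
    exact lt_of_le_of_lt htv hqe
  rw [mixingTime]
  refine Finset.sup_le fun i _ => Nat.sInf_le ?_
  exact key i

end Mix

end MixAux

/-- Theorem 1.3: the mixing time of a connected graph is at most
`8 · diam(H) · |E(H)|`. -/
theorem mixingTime_le_diam_mul_edges {V : Type} [Fintype V] (H : SimpleGraph V)
    (hconn : H.Connected) (hE : (edges H).Nonempty) :
    mixingTime H ≤ 8 * graphDiam H * (edges H).card :=
  aux_mixingTime_le H hconn hE

end RandomGraphPaper
end

section
/- Let ρ, μ ∈ (0,1) and D > 0 be constants, and let λ > 0 be sufficiently small in terms of μ, ρ and D (i.e., there exists λ₀ > 0 such that the following holds for all λ ∈ (0, λ₀]). Let (D_ℓ)_{ℓ≥1} be a sequence of feasible degree sequences with all degrees positive such that every D_ℓ has a μ-center, Σ_{i : d_i ≥ λ√m} d_i > ρ·μ¹⁰·m, and d_{n−3} ≥ m/(D·log m). Then with high probability every vertex of G(D_ℓ) whose degree is at least n^{1/3}/log m but less than λ·√m is adjacent to some vertex of degree at least λ·√m. -/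
open scoped Classical
open Filter

namespace RandomGraphPaper

section Switching

open Finset

variable {N : ℕ}

noncomputable def swG (G : SimpleGraph (Fin N)) (v u x y : Fin N) : SimpleGraph (Fin N) :=
  SimpleGraph.fromEdgeSet ((G.edgeSet \ {s(v,x), s(u,y)}) ∪ {s(v,u), s(x,y)})

structure Pack (G : SimpleGraph (Fin N)) (v u x y : Fin N) : Prop where
  hvx : G.Adj v x
  huy : G.Adj u y
  hvu : ¬ G.Adj v u
  hxy : ¬ G.Adj x y
  hvune : v ≠ u
  hvy : v ≠ y
  hxu : x ≠ u
  hxyne : x ≠ y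

namespace Pack

variable {G : SimpleGraph (Fin N)} {v u x y : Fin N} (hp : Pack G v u x y)

include hp in
lemma hvxne : v ≠ x := hp.hvx.ne
include hp in
lemma huyne : u ≠ y := hp.huy.ne

include hp in
lemma sw_adj (a b : Fin N) : (swG G v u x y).Adj a b ↔
    ((G.Adj a b ∧ s(a,b) ≠ s(v,x) ∧ s(a,b) ≠ s(u,y)) ∨ (s(a,b) = s(v,u) ∨ s(a,b) = s(x,y))) := by
  rw [swG, SimpleGraph.fromEdgeSet_adj]
  simp only [Set.mem_union, Set.mem_diff, SimpleGraph.mem_edgeSet, Set.mem_insert_iff,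
    Set.mem_singleton_iff, not_or]
  constructor
  · rintro ⟨h, -⟩
    tauto
  · intro h
    refine ⟨by tauto, ?_⟩
    rcases h with ⟨hadj, -⟩ | h | h
    · exact hadj.ne
    · rcases (Sym2.eq_iff).1 h with ⟨rfl, rfl⟩ | ⟨rfl, rfl⟩
      · exact hp.hvune
      · exact fun hc => hp.hvune hc.symm
    · rcases (Sym2.eq_iff).1 h with ⟨rfl, rfl⟩ | ⟨rfl, rfl⟩
      · exact hp.hxyne
      · exact fun hc => hp.hxyne hc.symm

end Pack

end Switching

end RandomGraphPaper

namespace RandomGraphPaper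

lemma sym2_eq_iff_right {α : Type*} {a b c : α} (h : a ≠ c) : s(a,b) = s(a,c) ↔ b = c := by
  rw [Sym2.eq_iff]
  constructor
  · rintro (⟨-, h1⟩ | ⟨h1, -⟩)
    · exact h1
    · exact absurd h1 h
  · intro h1; exact Or.inl ⟨rfl, h1⟩

lemma sym2_ne {α : Type*} {a b c d : α} (h1 : a ≠ c) (h2 : a ≠ d) : s(a,b) ≠ s(c,d) := by
  intro h
  rcases Sym2.eq_iff.1 h with ⟨h, -⟩ | ⟨h, -⟩
  · exact h1 h
  · exact h2 h

lemma sym2_eq_iff_left {α : Type*} {a b c : α} (h : a ≠ c) : s(a,b) = s(c,a) ↔ b = c := by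
  rw [Sym2.eq_iff]
  constructor
  · rintro (⟨h1, -⟩ | ⟨-, h1⟩)
    · exact absurd h1 h
    · exact h1
  · intro h1; exact Or.inr ⟨rfl, h1⟩

namespace Pack

open Finset

variable {N : ℕ} {G : SimpleGraph (Fin N)} {v u x y : Fin N} (hp : Pack G v u x y)

include hp in
lemma adj_v (b : Fin N) : (swG G v u x y).Adj v b ↔ ((G.Adj v b ∧ b ≠ x) ∨ b = u) := by
  rw [hp.sw_adj]
  simp only [ne_eq, sym2_eq_iff_right hp.hvune, sym2_eq_iff_right hp.hvxne,
    sym2_ne hp.hvune hp.hvy, sym2_ne hp.hvxne hp.hvy]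
  tauto

include hp in
lemma adj_u (b : Fin N) : (swG G v u x y).Adj u b ↔ ((G.Adj u b ∧ b ≠ y) ∨ b = v) := by
  rw [hp.sw_adj]
  simp only [ne_eq, sym2_eq_iff_left hp.hvune.symm, sym2_eq_iff_right hp.huyne,
    sym2_ne hp.hvune.symm hp.hxu.symm, sym2_ne hp.hxu.symm hp.huyne]
  tauto

include hp in
lemma adj_x (b : Fin N) : (swG G v u x y).Adj x b ↔ ((G.Adj x b ∧ b ≠ v) ∨ b = y) := by
  rw [hp.sw_adj]
  simp only [ne_eq, sym2_eq_iff_left hp.hvxne.symm, sym2_eq_iff_right hp.hxyne,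
    sym2_ne hp.hxu hp.hxyne, sym2_ne hp.hvxne.symm hp.hxu]
  tauto

include hp in
lemma adj_y (b : Fin N) : (swG G v u x y).Adj y b ↔ ((G.Adj y b ∧ b ≠ u) ∨ b = x) := by
  rw [hp.sw_adj]
  simp only [ne_eq, sym2_eq_iff_left hp.huyne.symm, sym2_eq_iff_left hp.hxyne.symm,
    sym2_ne hp.hvy.symm hp.hxyne.symm, sym2_ne hp.hvy.symm hp.huyne.symm]
  tauto

include hp in
lemma adj_other {a : Fin N} (h1 : a ≠ v) (h2 : a ≠ u) (h3 : a ≠ x) (h4 : a ≠ y) (b : Fin N) :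
    (swG G v u x y).Adj a b ↔ G.Adj a b := by
  rw [hp.sw_adj]
  simp only [ne_eq, sym2_ne h1 h3, sym2_ne h2 h4, sym2_ne h1 h2, sym2_ne h3 h4]
  tauto

include hp in
lemma deg_sw_v : deg (swG G v u x y) v = deg G v := by
  have hset : (Finset.univ.filter fun w => (swG G v u x y).Adj v w)
      = insert u ((Finset.univ.filter fun w => G.Adj v w).erase x) := by
    ext b
    simp only [mem_filter, mem_univ, true_and, mem_insert, mem_erase, hp.adj_v]; tauto
  have hx : x ∈ Finset.univ.filter fun w => G.Adj v w := by simp [hp.hvx]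
  have hpos : 0 < (Finset.univ.filter fun w => G.Adj v w).card := card_pos.2 ⟨x, hx⟩
  have hu : u ∉ (Finset.univ.filter fun w => G.Adj v w).erase x := by
    simp [hp.hvu]
  rw [deg, hset, card_insert_of_notMem hu, card_erase_of_mem hx, deg]; omega

include hp in
lemma deg_sw_u : deg (swG G v u x y) u = deg G u := by
  have huv : ¬ G.Adj u v := fun h => hp.hvu h.symm
  have hset : (Finset.univ.filter fun w => (swG G v u x y).Adj u w)
      = insert v ((Finset.univ.filter fun w => G.Adj u w).erase y) := by
    ext b
    simp only [mem_filter, mem_univ, true_and, mem_insert, mem_erase, hp.adj_u]; tauto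
  have hx : y ∈ Finset.univ.filter fun w => G.Adj u w := by simp [hp.huy]
  have hpos : 0 < (Finset.univ.filter fun w => G.Adj u w).card := card_pos.2 ⟨y, hx⟩
  have hu : v ∉ (Finset.univ.filter fun w => G.Adj u w).erase y := by
    simp [huv]
  rw [deg, hset, card_insert_of_notMem hu, card_erase_of_mem hx, deg]; omega

include hp in
lemma deg_sw_x : deg (swG G v u x y) x = deg G x := by
  have hxv : G.Adj x v := hp.hvx.symm
  have hset : (Finset.univ.filter fun w => (swG G v u x y).Adj x w)
      = insert y ((Finset.univ.filter fun w => G.Adj x w).erase v) := by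
    ext b
    simp only [mem_filter, mem_univ, true_and, mem_insert, mem_erase, hp.adj_x]; tauto
  have hx : v ∈ Finset.univ.filter fun w => G.Adj x w := by simp [hxv]
  have hpos : 0 < (Finset.univ.filter fun w => G.Adj x w).card := card_pos.2 ⟨v, hx⟩
  have hu : y ∉ (Finset.univ.filter fun w => G.Adj x w).erase v := by
    simp [hp.hxy]
  rw [deg, hset, card_insert_of_notMem hu, card_erase_of_mem hx, deg]; omega

include hp in
lemma deg_sw_y : deg (swG G v u x y) y = deg G y := by
  have hyu : G.Adj y u := hp.huy.symm
  have hyx : ¬ G.Adj y x := fun h => hp.hxy h.symm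
  have hset : (Finset.univ.filter fun w => (swG G v u x y).Adj y w)
      = insert x ((Finset.univ.filter fun w => G.Adj y w).erase u) := by
    ext b
    simp only [mem_filter, mem_univ, true_and, mem_insert, mem_erase, hp.adj_y]; tauto
  have hx : u ∈ Finset.univ.filter fun w => G.Adj y w := by simp [hyu]
  have hpos : 0 < (Finset.univ.filter fun w => G.Adj y w).card := card_pos.2 ⟨u, hx⟩
  have hu : x ∉ (Finset.univ.filter fun w => G.Adj y w).erase u := by
    simp [hyx]
  rw [deg, hset, card_insert_of_notMem hu, card_erase_of_mem hx, deg]; omega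

include hp in
lemma deg_sw (a : Fin N) : deg (swG G v u x y) a = deg G a := by
  by_cases h1 : a = v; · subst h1; exact hp.deg_sw_v
  by_cases h2 : a = u; · subst h2; exact hp.deg_sw_u
  by_cases h3 : a = x; · subst h3; exact hp.deg_sw_x
  by_cases h4 : a = y; · subst h4; exact hp.deg_sw_y
  unfold deg
  congr 1
  ext b
  simp only [mem_filter, mem_univ, true_and, hp.adj_other h1 h2 h3 h4]

include hp in
lemma sw_recover (a b : Fin N) : G.Adj a b ↔
    (((swG G v u x y).Adj a b ∧ s(a,b) ≠ s(v,u) ∧ s(a,b) ≠ s(x,y)) ∨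
      (s(a,b) = s(v,x) ∨ s(a,b) = s(u,y))) := by
  rw [hp.sw_adj]
  constructor
  · intro h
    by_cases h1 : s(a,b) = s(v,x); · tauto
    by_cases h2 : s(a,b) = s(u,y); · tauto
    refine Or.inl ⟨Or.inl ⟨h, h1, h2⟩, ?_, ?_⟩
    · intro hc; rcases Sym2.eq_iff.1 hc with ⟨rfl,rfl⟩|⟨rfl,rfl⟩
      · exact hp.hvu h
      · exact hp.hvu h.symm
    · intro hc; rcases Sym2.eq_iff.1 hc with ⟨rfl,rfl⟩|⟨rfl,rfl⟩
      · exact hp.hxy h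
      · exact hp.hxy h.symm
  · rintro (⟨h, h1, h2⟩ | h | h)
    · rcases h with ⟨h,-⟩|h|h
      exacts [h, absurd h h1, absurd h h2]
    · rcases Sym2.eq_iff.1 h with ⟨rfl,rfl⟩|⟨rfl,rfl⟩
      exacts [hp.hvx, hp.hvx.symm]
    · rcases Sym2.eq_iff.1 h with ⟨rfl,rfl⟩|⟨rfl,rfl⟩
      exacts [hp.huy, hp.huy.symm]

end Pack

lemma sw_left_inj {N : ℕ} {G₁ G₂ : SimpleGraph (Fin N)} {v u x y : Fin N}
    (hp1 : Pack G₁ v u x y) (hp2 : Pack G₂ v u x y)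
    (h : swG G₁ v u x y = swG G₂ v u x y) : G₁ = G₂ := by
  ext a b
  rw [hp1.sw_recover a b, hp2.sw_recover a b, h]

lemma sw_pair_inj {N : ℕ} {G : SimpleGraph (Fin N)} {v u x₁ y₁ x₂ y₂ : Fin N}
    (hp1 : Pack G v u x₁ y₁) (hp2 : Pack G v u x₂ y₂)
    (h : swG G v u x₁ y₁ = swG G v u x₂ y₂) : x₁ = x₂ ∧ y₁ = y₂ := by
  constructor
  · have hx : ¬ (swG G v u x₁ y₁).Adj v x₁ := by
      rw [hp1.adj_v]; simp [hp1.hxu]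
    rw [h, hp2.adj_v] at hx
    have := hp1.hvx
    tauto
  · have hy1v : y₁ ≠ v := fun hc => hp1.hvy hc.symm
    have hy : ¬ (swG G v u x₁ y₁).Adj u y₁ := by
      rw [hp1.adj_u]; simp [hy1v]
    rw [h, hp2.adj_u] at hy
    have := hp1.huy
    tauto

end RandomGraphPaper

namespace RandomGraphPaper

open Finset

variable {D : DegSeq}

lemma mem_graphs {G : SimpleGraph (Fin D.n)} : G ∈ graphs D ↔ ∀ i, deg G i = D.d i := by
  simp [graphs]

noncomputable def Es (D : DegSeq) (K : ℕ) (v : Fin D.n) (s : Finset (Fin D.n)) :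
    Finset (SimpleGraph (Fin D.n)) :=
  (graphs D).filter fun G => (∀ w, G.Adj v w → w ∈ s ∨ D.d w ≤ K) ∧ ∀ w ∈ s, G.Adj v w

lemma Es_subset (D : DegSeq) (K : ℕ) (v : Fin D.n) (s : Finset (Fin D.n)) :
    Es D K v s ⊆ graphs D := filter_subset _ _

section Step

variable (K : ℕ) (v u : Fin D.n) (s : Finset (Fin D.n))

lemma pack_of (huK : K < D.d u) (hvK : D.d v ≤ K) (hus : u ∉ s)
    {G : SimpleGraph (Fin D.n)} (hG : G ∈ Es D K v s) {x z : Fin D.n}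
    (h1 : G.Adj v x) (h2 : x ∉ s) (h3 : G.Adj u z) (h4 : z ≠ v) (h5 : z ≠ x)
    (h6 : ¬ G.Adj x z) : Pack G v u x z := by
  obtain ⟨hGg, hlow, hsadj⟩ := mem_filter.1 hG
  have hdeg : ∀ i, deg G i = D.d i := mem_graphs.1 hGg
  have hvu : ¬ G.Adj v u := by
    intro h
    rcases hlow u h with h' | h'
    · exact hus h'
    · exact absurd huK (not_lt.2 h')
  have hvune : v ≠ u := by
    intro h; rw [h] at hvK; exact absurd huK (not_lt.2 hvK)
  have hxlow : D.d x ≤ K := by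
    rcases hlow x h1 with h' | h'
    · exact absurd h' h2
    · exact h'
  have hxu : x ≠ u := by
    intro h; rw [h] at hxlow; exact absurd huK (not_lt.2 hxlow)
  exact ⟨h1, h3, hvu, h6, hvune, h4.symm, hxu, h5.symm⟩

lemma adj_of_eq_sw {G G' : SimpleGraph (Fin D.n)} {x z : Fin D.n}
    (hp : Pack G v u x z) (heq : G' = swG G v u x z) : G'.Adj x z := by
  subst heq
  rw [hp.adj_x]
  exact Or.inr rfl

lemma step (huK : K < D.d u) (hvK : D.d v ≤ K) (hus : u ∉ s) :
    (Es D K v s).card * ((D.d v - s.card) * (D.d u - 2 - K)) ≤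
      (Es D K v (insert u s)).card * (∑ i, D.d i) := by
  classical
  set r : SimpleGraph (Fin D.n) → SimpleGraph (Fin D.n) → Prop := fun G G' =>
    ∃ x z, (G.Adj v x ∧ x ∉ s ∧ G.Adj u z ∧ z ≠ v ∧ z ≠ x ∧ ¬ G.Adj x z)
      ∧ G' = swG G v u x z with hrdef
  refine Finset.card_mul_le_card_mul r ?_ ?_
  · -- forward count
    intro G hG
    obtain ⟨hGg, hlow, hsadj⟩ := mem_filter.1 hG
    have hdeg : ∀ i, deg G i = D.d i := mem_graphs.1 hGg
    set Nv := Finset.univ.filter (fun w => G.Adj v w) with hNv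
    set X := Nv \ s with hX
    set Y : Fin D.n → Finset (Fin D.n) := fun x =>
      (((Finset.univ.filter fun w => G.Adj u w) \
        (Finset.univ.filter fun w => G.Adj x w)).erase v).erase x with hY
    have hmemX : ∀ x ∈ X, G.Adj v x ∧ x ∉ s := by
      intro x hx
      rw [hX, Finset.mem_sdiff, hNv, mem_filter] at hx
      exact ⟨hx.1.2, hx.2⟩
    have hmemY : ∀ x z, z ∈ Y x → G.Adj u z ∧ z ≠ v ∧ z ≠ x ∧ ¬ G.Adj x z := by
      intro x z hz
      rw [hY] at hz
      simp only [mem_erase, Finset.mem_sdiff, mem_filter, mem_univ, true_and] at hz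
      exact ⟨hz.2.2.1, hz.2.1, hz.1, hz.2.2.2⟩
    have hYcard : ∀ x ∈ X, D.d u - 2 - K ≤ (Y x).card := by
      intro x hx
      have hxlow : D.d x ≤ K := by
        rcases hlow x (hmemX x hx).1 with h' | h'
        · exact absurd h' (hmemX x hx).2
        · exact h'
      have c1 : (Finset.univ.filter fun w => G.Adj u w).card -
          (Finset.univ.filter fun w => G.Adj x w).card ≤
          ((Finset.univ.filter fun w => G.Adj u w) \
            (Finset.univ.filter fun w => G.Adj x w)).card := le_card_sdiff _ _
      have c2 := pred_card_le_card_erase (s :=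
        ((Finset.univ.filter fun w => G.Adj u w) \
          (Finset.univ.filter fun w => G.Adj x w))) (a := v)
      have c3 := pred_card_le_card_erase (s :=
        (((Finset.univ.filter fun w => G.Adj u w) \
          (Finset.univ.filter fun w => G.Adj x w)).erase v)) (a := x)
      have e1 : (Finset.univ.filter fun w => G.Adj u w).card = D.d u := hdeg u
      have e2 : (Finset.univ.filter fun w => G.Adj x w).card = D.d x := hdeg x
      rw [e1, e2] at c1
      simp only [hY]
      omega
    have hXcard : D.d v - s.card ≤ X.card := by
      have h2 := le_card_sdiff s Nv
      have e1 : Nv.card = D.d v := hdeg v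
      rw [hX]
      omega
    set pairs := X.biUnion (fun x => (Y x).image (fun z => (x, z))) with hpairs
    have hpairs_mem : ∀ p ∈ pairs, (G.Adj v p.1 ∧ p.1 ∉ s) ∧
        (G.Adj u p.2 ∧ p.2 ≠ v ∧ p.2 ≠ p.1 ∧ ¬ G.Adj p.1 p.2) := by
      intro p hp
      rw [hpairs, mem_biUnion] at hp
      obtain ⟨x, hx, hp⟩ := hp
      rw [mem_image] at hp
      obtain ⟨z, hz, rfl⟩ := hp
      exact ⟨hmemX x hx, hmemY x z hz⟩
    have hcard_pairs : (D.d v - s.card) * (D.d u - 2 - K) ≤ pairs.card := by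
      rw [hpairs, card_biUnion]
      · calc (D.d v - s.card) * (D.d u - 2 - K)
            ≤ X.card * (D.d u - 2 - K) := Nat.mul_le_mul_right _ hXcard
          _ = X.card • (D.d u - 2 - K) := by rw [smul_eq_mul]
          _ ≤ ∑ x ∈ X, ((Y x).image (fun z => (x, z))).card := by
              refine Finset.card_nsmul_le_sum X _ _ ?_
              intro x hx
              have hinj : Function.Injective (fun z : Fin D.n => (x, z)) := by
                intro a b h
                simpa using congrArg Prod.snd h
              rw [Finset.card_image_of_injective _ hinj]
              exact hYcard x hx
      · intro x1 h1 x2 h2 hne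
        simp only [disjoint_left, mem_image]
        rintro p ⟨z1, hz1, rfl⟩ ⟨z2, hz2, heq⟩
        exact hne (congrArg Prod.fst heq).symm
    have hpack : ∀ p ∈ pairs, Pack G v u p.1 p.2 := by
      intro p hp
      obtain ⟨⟨h1, h2⟩, h3, h4, h5, h6⟩ := hpairs_mem p hp
      exact pack_of K v u s huK hvK hus hG h1 h2 h3 h4 h5 h6
    have himg : ∀ p ∈ pairs, swG G v u p.1 p.2 ∈ (Es D K v (insert u s)).bipartiteAbove r G := by
      intro p hp
      obtain ⟨⟨h1, h2⟩, h3, h4, h5, h6⟩ := hpairs_mem p hp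
      have hp' := hpack p hp
      rw [Finset.mem_bipartiteAbove]
      constructor
      · rw [Es, mem_filter]
        refine ⟨mem_graphs.2 (fun i => ?_), ?_, ?_⟩
        · rw [hp'.deg_sw i]; exact hdeg i
        · intro w hw
          rw [hp'.adj_v] at hw
          rcases hw with ⟨hw1, hw2⟩ | rfl
          · rcases hlow w hw1 with h' | h'
            · exact Or.inl (mem_insert_of_mem h')
            · exact Or.inr h'
          · exact Or.inl (mem_insert_self _ _)
        · intro w hw
          rw [hp'.adj_v]
          rcases mem_insert.1 hw with rfl | hw'
          · exact Or.inr rfl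
          · exact Or.inl ⟨hsadj w hw', fun hc => h2 (hc ▸ hw')⟩
      · exact ⟨p.1, p.2, ⟨h1, h2, h3, h4, h5, h6⟩, rfl⟩
    calc (D.d v - s.card) * (D.d u - 2 - K) ≤ pairs.card := hcard_pairs
      _ ≤ ((Es D K v (insert u s)).bipartiteAbove r G).card := by
          apply Finset.card_le_card_of_injOn (fun p => swG G v u p.1 p.2)
          · exact himg
          · intro p hp q hq heq
            obtain ⟨hx, hz⟩ := sw_pair_inj (hpack p (Finset.mem_coe.1 hp))
              (hpack q (Finset.mem_coe.1 hq)) heq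
            exact Prod.ext hx hz
  · -- backward count
    intro G' hG'
    obtain ⟨hG'g, hlow', hsadj'⟩ := mem_filter.1 hG'
    have hdeg' : ∀ i, deg G' i = D.d i := mem_graphs.1 hG'g
    set Tset := (Finset.univ ×ˢ Finset.univ).filter
      (fun p : Fin D.n × Fin D.n => G'.Adj p.1 p.2) with hT
    have hTsub : Tset ⊆ Finset.univ.biUnion
        (fun a => (Finset.univ.filter fun w => G'.Adj a w).image (fun z => (a, z))) := by
      intro p hp
      rw [hT, mem_filter] at hp
      rw [mem_biUnion]
      refine ⟨p.1, mem_univ _, ?_⟩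
      rw [mem_image]
      exact ⟨p.2, by simp [hp.2], by simp⟩
    have hTcard : Tset.card ≤ ∑ i, D.d i := by
      refine (card_le_card hTsub).trans (card_biUnion_le.trans (Finset.sum_le_sum ?_))
      intro a _
      have : (Finset.univ.filter fun w => G'.Adj a w).card = D.d a := hdeg' a
      calc ((Finset.univ.filter fun w => G'.Adj a w).image (fun z => (a, z))).card
          ≤ (Finset.univ.filter fun w => G'.Adj a w).card := card_image_le
        _ = D.d a := this
    refine le_trans ?_ hTcard
    refine Finset.card_le_card_of_injOn
      (fun G => if h : r G G' then (h.choose, h.choose_spec.choose) else (v, v)) ?_ ?_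
    · intro G hGmem
      rw [Finset.mem_coe, Finset.mem_bipartiteBelow] at hGmem
      obtain ⟨hGEs, hr⟩ := hGmem
      simp only [dif_pos hr]
      obtain ⟨hc, heq⟩ := hr.choose_spec.choose_spec
      obtain ⟨h1, h2, h3, h4, h5, h6⟩ := hc
      have hp' := pack_of K v u s huK hvK hus hGEs h1 h2 h3 h4 h5 h6
      rw [Finset.mem_coe, hT, mem_filter]
      exact ⟨by simp, adj_of_eq_sw v u hp' heq⟩
    · intro G1 h1m G2 h2m heq
      have h1m' := Finset.mem_coe.1 h1m
      have h2m' := Finset.mem_coe.1 h2m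
      rw [Finset.mem_bipartiteBelow] at h1m' h2m'
      obtain ⟨h1Es, h1r⟩ := h1m'
      obtain ⟨h2Es, h2r⟩ := h2m'
      simp only [dif_pos h1r, dif_pos h2r] at heq
      have hx : h1r.choose = h2r.choose := congrArg Prod.fst heq
      have hz : h1r.choose_spec.choose = h2r.choose_spec.choose := congrArg Prod.snd heq
      obtain ⟨hc1, he1⟩ := h1r.choose_spec.choose_spec
      obtain ⟨hc2, he2⟩ := h2r.choose_spec.choose_spec
      obtain ⟨a1, a2, a3, a4, a5, a6⟩ := hc1
      obtain ⟨b1, b2, b3, b4, b5, b6⟩ := hc2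
      have hp1 := pack_of K v u s huK hvK hus h1Es a1 a2 a3 a4 a5 a6
      have hp2 := pack_of K v u s huK hvK hus h2Es b1 b2 b3 b4 b5 b6
      have hp2' : Pack G2 v u h1r.choose h1r.choose_spec.choose := by
        rw [hz, hx]; exact hp2
      have he2' : G' = swG G2 v u h1r.choose h1r.choose_spec.choose := by
        rw [hz, hx]; exact he2
      exact sw_left_inj hp1 hp2' (he1.symm.trans he2')


end Step

end RandomGraphPaper

namespace RandomGraphPaper

open Finset

lemma key (D : DegSeq) (K T : ℕ) (h4n : 4 ≤ D.n)
    (hT : ∀ j : Fin D.n, D.n - 4 ≤ (j : ℕ) → T ≤ D.d j)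
    (v : Fin D.n) (hvK : D.d v ≤ K) (hKT : K < T) :
    (Es D K v ∅).card * ((D.d v - 3) * (T - 2 - K)) ^ 4 ≤
      (graphs D).card * (∑ i, D.d i) ^ 4 := by
  classical
  have hn0 : 0 < D.n := by omega
  set u : ℕ → Fin D.n := fun j => ⟨D.n - 1 - (j - 1) % 4, by omega⟩ with hu
  have huval : ∀ j, j ≤ 4 → 1 ≤ j → ((u j : Fin D.n) : ℕ) = D.n - j := by
    intro j h1 h2; simp [hu]; omega
  have hudeg : ∀ j, 1 ≤ j → j ≤ 4 → T ≤ D.d (u j) := by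
    intro j h1 h2
    refine hT (u j) ?_
    rw [huval j h2 h1]; omega
  have huK : ∀ j, 1 ≤ j → j ≤ 4 → K < D.d (u j) := fun j h1 h2 =>
    lt_of_lt_of_le hKT (hudeg j h1 h2)
  have hune : ∀ j k, 1 ≤ j → j ≤ 4 → 1 ≤ k → k ≤ 4 → j ≠ k → u j ≠ u k := by
    intro j k hj1 hj2 hk1 hk2 hjk
    intro h
    have hvv : ((u j : Fin D.n) : ℕ) = ((u k : Fin D.n) : ℕ) := congrArg Fin.val h
    rw [huval j hj2 hj1, huval k hk2 hk1] at hvv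
    omega
  set s1 : Finset (Fin D.n) := {u 1} with hs1
  set s2 := insert (u 2) s1 with hs2
  set s3 := insert (u 3) s2 with hs3
  have h21 : u 2 ∉ s1 := by
    rw [hs1]; simp; exact hune 2 1 (by norm_num) (by norm_num) (by norm_num) (by norm_num) (by norm_num)
  have h31 : u 3 ∉ s2 := by
    rw [hs2, hs1]; simp; push_neg
    exact ⟨hune 3 2 (by norm_num) (by norm_num) (by norm_num) (by norm_num) (by norm_num),
      hune 3 1 (by norm_num) (by norm_num) (by norm_num) (by norm_num) (by norm_num)⟩
  have h41 : u 4 ∉ s3 := by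
    rw [hs3, hs2, hs1]; simp; push_neg
    exact ⟨hune 4 3 (by norm_num) (by norm_num) (by norm_num) (by norm_num) (by norm_num),
      hune 4 2 (by norm_num) (by norm_num) (by norm_num) (by norm_num) (by norm_num),
      hune 4 1 (by norm_num) (by norm_num) (by norm_num) (by norm_num) (by norm_num)⟩
  have hc1 : s1.card = 1 := by rw [hs1]; simp
  have hc2 : s2.card = 2 := by rw [hs2, card_insert_of_notMem h21, hc1]
  have hc3 : s3.card = 3 := by rw [hs3, card_insert_of_notMem h31, hc2]
  set M := ∑ i, D.d i with hM
  set F := (D.d v - 3) * (T - 2 - K) with hF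
  have hFle : ∀ (s : Finset (Fin D.n)) (j : ℕ), s.card ≤ 3 → 1 ≤ j → j ≤ 4 →
      F ≤ (D.d v - s.card) * (D.d (u j) - 2 - K) := by
    intro s j hs hj1 hj2
    refine Nat.mul_le_mul ?_ ?_
    · exact Nat.sub_le_sub_left hs _
    · exact Nat.sub_le_sub_right (Nat.sub_le_sub_right (hudeg j hj1 hj2) 2) K
  have hstep : ∀ (s : Finset (Fin D.n)) (j : ℕ), s.card ≤ 3 → 1 ≤ j → j ≤ 4 → u j ∉ s →
      (Es D K v s).card * F ≤ (Es D K v (insert (u j) s)).card * M := by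
    intro s j hs hj1 hj2 hus
    calc (Es D K v s).card * F ≤
        (Es D K v s).card * ((D.d v - s.card) * (D.d (u j) - 2 - K)) :=
          Nat.mul_le_mul_left _ (hFle s j hs hj1 hj2)
      _ ≤ (Es D K v (insert (u j) s)).card * M :=
          step K v (u j) s (huK j hj1 hj2) hvK hus
  have h1 : (Es D K v ∅).card * F ≤ (Es D K v s1).card * M := by
    have := hstep ∅ 1 (by simp) (by norm_num) (by norm_num) (by simp)
    simpa [hs1] using this
  have h2 : (Es D K v s1).card * F ≤ (Es D K v s2).card * M :=
    hstep s1 2 (by omega) (by norm_num) (by norm_num) h21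
  have h3 : (Es D K v s2).card * F ≤ (Es D K v s3).card * M :=
    hstep s2 3 (by omega) (by norm_num) (by norm_num) h31
  have h4 : (Es D K v s3).card * F ≤ (Es D K v (insert (u 4) s3)).card * M :=
    hstep s3 4 (by omega) (by norm_num) (by norm_num) h41
  have h5 : (Es D K v (insert (u 4) s3)).card ≤ (graphs D).card :=
    card_le_card (Es_subset _ _ _ _)
  set a0 := (Es D K v ∅).card
  set a1 := (Es D K v s1).card
  set a2 := (Es D K v s2).card
  set a3 := (Es D K v s3).card
  set a4 := (Es D K v (insert (u 4) s3)).card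
  calc a0 * F ^ 4 = (a0 * F) * F ^ 3 := by ring
    _ ≤ (a1 * M) * F ^ 3 := Nat.mul_le_mul_right _ h1
    _ = (a1 * F) * (M * F ^ 2) := by ring
    _ ≤ (a2 * M) * (M * F ^ 2) := Nat.mul_le_mul_right _ h2
    _ = (a2 * F) * (M ^ 2 * F) := by ring
    _ ≤ (a3 * M) * (M ^ 2 * F) := Nat.mul_le_mul_right _ h3
    _ = (a3 * F) * M ^ 3 := by ring
    _ ≤ (a4 * M) * M ^ 3 := Nat.mul_le_mul_right _ h4
    _ = a4 * M ^ 4 := by ring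
    _ ≤ (graphs D).card * M ^ 4 := Nat.mul_le_mul_right _ h5

end RandomGraphPaper

namespace RandomGraphPaper

open Finset Real

lemma mD_eq (D : DegSeq) : mD D = (∑ i, D.d i) / 2 := rfl

lemma d_le_n (D : DegSeq) (hfeas : (graphs D).Nonempty) (i : Fin D.n) : D.d i ≤ D.n := by
  obtain ⟨G, hG⟩ := hfeas
  have := (mem_graphs.1 hG) i
  rw [← this, deg]
  exact (card_le_card (subset_univ _)).trans (by simp)

set_option maxHeartbeats 1000000 in
lemma main_bound (D : DegSeq) (lam Dc : ℝ) (hlam : 0 < lam) (hDc : 0 < Dc)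
    (hfeas : (graphs D).Nonempty) (h4 : 4 ≤ D.n)
    (htop : (mD D : ℝ) / (Dc * Real.log (mD D)) ≤ (D.d ⟨D.n - 4, by omega⟩ : ℝ))
    (hm2 : 2 ≤ mD D) (hn5 : 5 ≤ D.n)
    (hlog : 24 * Real.log D.n ≤ (D.n : ℝ) ^ ((1:ℝ)/3))
    (hgap : 2 * (lam * Real.sqrt (mD D)) + 4 ≤ (mD D : ℝ) / (Dc * Real.log (mD D))) :
    (((graphs D).filter fun G => ¬ (∀ v : Fin D.n,
        ((D.n : ℝ) ^ ((1:ℝ)/3) / Real.log (mD D) ≤ (deg G v : ℝ) →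
        (deg G v : ℝ) < lam * Real.sqrt (mD D) →
        ∃ w : Fin D.n, G.Adj v w ∧ lam * Real.sqrt (mD D) ≤ (deg G w : ℝ)))).card : ℝ) /
      ((graphs D).card : ℝ) ≤
    (12*Dc)^4 * 2^8 * (Real.log D.n)^8 / (D.n : ℝ) ^ ((1:ℝ)/3) := by
  classical
  set n := D.n with hn
  set m := mD D with hm
  set M := ∑ i, D.d i with hMdef
  set X : ℝ := (n : ℝ) ^ ((1:ℝ)/3) with hX
  set a : ℝ := Real.log m with ha'
  set b : ℝ := Real.log n with hb'
  set K : ℕ := Nat.floor (lam * Real.sqrt m) with hK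
  set Tn : ℕ := D.d ⟨n - 4, by omega⟩ with hTn
  have hm0 : (0:ℝ) < (m:ℝ) := by positivity ; 
  have hm1 : (1:ℝ) < (m:ℝ) := by exact_mod_cast hm2
  have hn1 : (1:ℝ) < (n:ℝ) := by
    have : (5:ℝ) ≤ (n:ℝ) := by exact_mod_cast hn5
    linarith
  have ha : 0 < a := Real.log_pos hm1
  have hb : 0 < b := Real.log_pos hn1
  have hXpos : 0 < X := by
    rw [hX]; positivity
  have hsm : (0:ℝ) ≤ lam * Real.sqrt m := by positivity
  have hKr : (K:ℝ) ≤ lam * Real.sqrt m := Nat.floor_le hsm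
  have hTreal : 2*(K:ℝ) + 4 ≤ (Tn : ℝ) := by
    have h1 : 2*(K:ℝ) + 4 ≤ 2*(lam * Real.sqrt m) + 4 := by linarith
    exact h1.trans (hgap.trans htop)
  have hKTnat : 2*K + 4 ≤ Tn := by exact_mod_cast hTreal
  have hKT : K < Tn := by omega
  have hTpos : (0:ℝ) < (Tn:ℝ) := by
    have : (4:ℝ) ≤ (Tn:ℝ) := by linarith [Nat.cast_nonneg (α := ℝ) K]
    linarith
  have hDca : 0 < Dc * a := by positivity
  have hmT : (m:ℝ) ≤ (Tn:ℝ) * (Dc * a) := by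
    have := (div_le_iff₀ hDca).1 htop
    exact this
  have hdlen := d_le_n D hfeas
  have hmM : m = M / 2 := by rw [hm, hMdef, mD]
  have hMle2m : M ≤ 2 * m + 1 := by
    have := Nat.div_add_mod M 2
    have h2 : M % 2 < 2 := Nat.mod_lt _ (by norm_num)
    omega
  have hMle : (M:ℝ) ≤ 3 * m := by
    have : M ≤ 3 * m := by omega
    exact_mod_cast this
  have hmn2 : m ≤ n^2 := by
    have h1 : M ≤ n * n := by
      calc M ≤ univ.card • n := Finset.sum_le_card_nsmul univ D.d n (fun i _ => hdlen i)
        _ = n * n := by simp [card_univ, smul_eq_mul, hn]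
    have h2 : m ≤ M := by rw [hmM]; exact Nat.div_le_self _ _
    calc m ≤ M := h2
      _ ≤ n ^ 2 := by rw [pow_two]; exact h1
  have ha2b : a ≤ 2 * b := by
    rw [ha', hb']
    have h1 : Real.log m ≤ Real.log ((n:ℝ)^2) := by
      apply Real.log_le_log hm0
      have : ((m:ℕ):ℝ) ≤ ((n^2 : ℕ):ℝ) := by exact_mod_cast hmn2
      push_cast at this ⊢
      linarith
    rwa [Real.log_pow, Nat.cast_ofNat] at h1
  set Cg : ℝ := ((graphs D).card : ℝ) with hCg
  have hCgpos : 0 < Cg := by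
    rw [hCg]
    exact_mod_cast Finset.card_pos.2 hfeas
  set ε : ℝ := 12*Dc*(2*b)^2/X with hε
  have hεpos : 0 < ε := by rw [hε]; positivity
  set Bad : Fin n → Finset (SimpleGraph (Fin n)) := fun v =>
    (graphs D).filter (fun G => (X / a ≤ (D.d v:ℝ)) ∧ ((D.d v:ℝ) < lam * Real.sqrt m) ∧
      ∀ w, G.Adj v w → (D.d w:ℝ) < lam * Real.sqrt m) with hBad
  -- union bound subset
  have hsub : ((graphs D).filter fun G => ¬ (∀ v : Fin n,
        (X / a ≤ (deg G v : ℝ) →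
        (deg G v : ℝ) < lam * Real.sqrt m →
        ∃ w : Fin n, G.Adj v w ∧ lam * Real.sqrt m ≤ (deg G w : ℝ)))) ⊆
      univ.biUnion Bad := by
    intro G hG
    obtain ⟨hGg, hnP⟩ := mem_filter.1 hG
    have hdeg := mem_graphs.1 hGg
    push_neg at hnP
    obtain ⟨v, h1, h2, h3⟩ := hnP
    rw [mem_biUnion]
    refine ⟨v, mem_univ _, ?_⟩
    rw [hBad, mem_filter]
    refine ⟨hGg, ?_, ?_, ?_⟩
    · rw [← hdeg v]; exact h1
    · rw [← hdeg v]; exact h2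
    · intro w hw
      rw [← hdeg w]
      exact h3 w hw
  -- per-vertex bound
  have hv : ∀ v : Fin n, ((Bad v).card : ℝ) / Cg ≤ ε^4 := by
    intro v
    by_cases hempty : Bad v = ∅
    · rw [hempty]
      simp
      positivity
    · obtain ⟨G0, hG0⟩ := Finset.nonempty_of_ne_empty hempty
      rw [hBad, mem_filter] at hG0
      obtain ⟨-, hmed1, hmed2, -⟩ := hG0
      have hvK : D.d v ≤ K := Nat.le_floor hmed2.le
      have hsubE : Bad v ⊆ Es D K v ∅ := by
        intro G hG
        rw [hBad, mem_filter] at hG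
        rw [Es, mem_filter]
        refine ⟨hG.1, ?_, by simp⟩
        intro w hw
        exact Or.inr (Nat.le_floor (hG.2.2.2 w hw).le)
      have hTmono : ∀ j : Fin n, n - 4 ≤ (j:ℕ) → Tn ≤ D.d j := by
        intro j hj
        rw [hTn]
        exact D.mono (by rw [Fin.le_def]; exact hj)
      have hkey := key D K Tn h4 hTmono v hvK hKT
      have hcardle : (Bad v).card ≤ (Es D K v ∅).card := card_le_card hsubE
      have hkey2 : (Bad v).card * ((D.d v - 3) * (Tn - 2 - K))^4 ≤
          (graphs D).card * M^4 :=
        le_trans (Nat.mul_le_mul_right _ hcardle) hkey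
      set dv : ℝ := (D.d v : ℝ) with hdv
      have hXa : 12 * a ≤ X := by
        calc 12 * a ≤ 12 * (2*b) := by linarith
          _ = 24 * b := by ring
          _ ≤ X := hlog
      have hdv12 : (12:ℝ) ≤ dv := by
        have h12 : (12:ℝ) ≤ X / a := (le_div_iff₀ ha).2 (by linarith)
        linarith
    -- cast key inequality
      have hd3 : 3 ≤ D.d v := by
        have h3' : (3:ℝ) ≤ dv := by linarith
        rw [hdv] at h3'
        exact_mod_cast h3'
      have hsub2 : 2 + K ≤ Tn := by omega
      set Fr : ℝ := (dv - 3) * ((Tn:ℝ) - 2 - K) with hFr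
      have hFcast : (((D.d v - 3) * (Tn - 2 - K) : ℕ) : ℝ) = Fr := by
        rw [hFr]
        push_cast [Nat.cast_sub hd3, Nat.cast_sub (show K ≤ Tn - 2 by omega),
          Nat.cast_sub (show 2 ≤ Tn by omega)]
        ring
      have hkeyR : ((Bad v).card : ℝ) * Fr^4 ≤ Cg * (M:ℝ)^4 := by
        rw [← hFcast, hCg]
        exact_mod_cast hkey2
      have hFge : (dv/2) * ((Tn:ℝ)/2) ≤ Fr := by
        rw [hFr]
        have h1 : dv/2 ≤ dv - 3 := by linarith
        have h2 : (Tn:ℝ)/2 ≤ (Tn:ℝ) - 2 - K := by linarith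
        have h3 : (0:ℝ) ≤ dv/2 := by linarith
        have h4' : (0:ℝ) ≤ (Tn:ℝ)/2 := by linarith
        exact mul_le_mul h1 h2 h4' (by linarith)
      have hFpos : 0 < Fr := by
        have : (0:ℝ) < (dv/2) * ((Tn:ℝ)/2) := by positivity
        linarith
      have hXdva : X ≤ dv * a := (div_le_iff₀ ha).1 hmed1
      have hdvpos : (0:ℝ) < dv := by linarith
      have hstep : 3*(m:ℝ)*X ≤ 3*Dc*dv*(Tn:ℝ)*(2*b)^2 := by
        have k1 : (m:ℝ)*X ≤ ((Tn:ℝ)*(Dc*a))*(dv*a) :=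
          mul_le_mul hmT hXdva hXpos.le (by positivity)
        have k2 : a*a ≤ (2*b)*(2*b) := mul_self_le_mul_self ha.le ha2b
        have k3 : ((Tn:ℝ)*(Dc*a))*(dv*a) = (Dc*(Tn:ℝ)*dv)*(a*a) := by ring
        have k4 : (Dc*(Tn:ℝ)*dv)*(a*a) ≤ (Dc*(Tn:ℝ)*dv)*((2*b)*(2*b)) :=
          mul_le_mul_of_nonneg_left k2 (by positivity)
        calc 3*(m:ℝ)*X = 3*((m:ℝ)*X) := by ring
          _ ≤ 3*(((Tn:ℝ)*(Dc*a))*(dv*a)) := by linarith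
          _ = 3*((Dc*(Tn:ℝ)*dv)*(a*a)) := by rw [k3]
          _ ≤ 3*((Dc*(Tn:ℝ)*dv)*((2*b)*(2*b))) := by linarith
          _ = 3*Dc*dv*(Tn:ℝ)*(2*b)^2 := by ring
      have hMeF : (M:ℝ) ≤ ε * Fr := by
        have h1 : 3*(m:ℝ) ≤ 3*Dc*dv*(Tn:ℝ)*(2*b)^2 / X := (le_div_iff₀ hXpos).2 hstep
        have h2 : ε * ((dv/2) * ((Tn:ℝ)/2)) = 3*Dc*(2*b)^2*dv*(Tn:ℝ)/X := by
          rw [hε]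
          field_simp
          ring
        have h3 : ε * ((dv/2) * ((Tn:ℝ)/2)) ≤ ε * Fr :=
          mul_le_mul_of_nonneg_left hFge hεpos.le
        calc (M:ℝ) ≤ 3*m := hMle
          _ ≤ 3*Dc*dv*(Tn:ℝ)*(2*b)^2 / X := h1
          _ = 3*Dc*(2*b)^2*dv*(Tn:ℝ)/X := by ring
          _ = ε * ((dv/2) * ((Tn:ℝ)/2)) := h2.symm
          _ ≤ ε * Fr := h3
      have hM4 : (M:ℝ)^4 ≤ ε^4 * Fr^4 := by
        calc (M:ℝ)^4 ≤ (ε*Fr)^4 := pow_le_pow_left₀ (by positivity) hMeF 4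
          _ = ε^4 * Fr^4 := by ring
      have hBle : ((Bad v).card : ℝ) ≤ Cg * ε^4 := by
        have h5 : ((Bad v).card : ℝ) * Fr^4 ≤ (Cg * ε^4) * Fr^4 := by
          calc ((Bad v).card : ℝ) * Fr^4 ≤ Cg * (M:ℝ)^4 := hkeyR
            _ ≤ Cg * (ε^4 * Fr^4) := mul_le_mul_of_nonneg_left hM4 hCgpos.le
            _ = (Cg * ε^4) * Fr^4 := by ring
        exact le_of_mul_le_mul_right h5 (by positivity)
      rw [div_le_iff₀ hCgpos]
      calc ((Bad v).card:ℝ) ≤ Cg * ε^4 := hBle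
        _ = ε^4 * Cg := by ring
  -- assemble
  have hc : ((((graphs D).filter fun G => ¬ (∀ v : Fin n,
        (X / a ≤ (deg G v : ℝ) →
        (deg G v : ℝ) < lam * Real.sqrt m →
        ∃ w : Fin n, G.Adj v w ∧ lam * Real.sqrt m ≤ (deg G w : ℝ)))).card : ℕ) : ℝ) ≤
      ∑ v : Fin n, ((Bad v).card : ℝ) := by
    have := (card_le_card hsub).trans card_biUnion_le
    exact_mod_cast this
  have hfinal : ((((graphs D).filter fun G => ¬ (∀ v : Fin n,
        (X / a ≤ (deg G v : ℝ) →
        (deg G v : ℝ) < lam * Real.sqrt m →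
        ∃ w : Fin n, G.Adj v w ∧ lam * Real.sqrt m ≤ (deg G w : ℝ)))).card : ℕ) : ℝ) / Cg ≤
      (n:ℝ) * ε^4 := by
    calc _ ≤ (∑ v : Fin n, ((Bad v).card : ℝ)) / Cg := by gcongr
      _ = ∑ v : Fin n, ((Bad v).card : ℝ) / Cg := Finset.sum_div _ _ _
      _ ≤ ∑ _v : Fin n, ε^4 := Finset.sum_le_sum (fun v _ => hv v)
      _ = (n:ℝ) * ε^4 := by
          rw [Finset.sum_const, card_univ, Fintype.card_fin, nsmul_eq_mul]
  have hX3 : X^(3:ℕ) = (n:ℝ) := by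
    rw [hX, ← Real.rpow_natCast ((n:ℝ)^((1:ℝ)/3)) 3, ← Real.rpow_mul (Nat.cast_nonneg n)]
    norm_num
  have hfin2 : (n:ℝ) * ε^4 = (12*Dc)^4 * 2^8 * b^8 / X := by
    rw [hε, div_pow, ← hX3]
    field_simp
  exact hfinal.trans (le_of_eq hfin2)

end RandomGraphPaper


namespace RandomGraphPaper

/-- Proposition 4.2: medium-degree vertices are adjacent to
high-degree vertices. -/
theorem medium_degree_adjacent_to_high
    (ρ μ : ℝ) (hρ0 : 0 < ρ) (hρ1 : ρ < 1) (hμ0 : 0 < μ) (hμ1 : μ < 1)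
    (Dc : ℝ) (hDc : 0 < Dc) :
    ∃ lam₀ : ℝ, 0 < lam₀ ∧
      ∀ lam : ℝ, 0 < lam → lam ≤ lam₀ →
        ∀ Ds : ℕ → DegSeq,
          Filter.Tendsto (fun ℓ => (Ds ℓ).n) Filter.atTop Filter.atTop →
          (∀ ℓ, Feasible (Ds ℓ)) →
          (∀ ℓ i, 0 < (Ds ℓ).d i) →
          (∀ ℓ, HasCenter μ (Ds ℓ)) →
          (∀ ℓ, ρ * μ ^ 10 * (mD (Ds ℓ) : ℝ) <
            ∑ i ∈ Finset.univ.filter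
              (fun i : Fin (Ds ℓ).n =>
                lam * Real.sqrt (mD (Ds ℓ) : ℝ) ≤ ((Ds ℓ).d i : ℝ)),
              ((Ds ℓ).d i : ℝ)) →
          (∀ ℓ, ∃ h4 : 4 ≤ (Ds ℓ).n,
            (mD (Ds ℓ) : ℝ) / (Dc * Real.log (mD (Ds ℓ))) ≤
              ((Ds ℓ).d ⟨(Ds ℓ).n - 4, by omega⟩ : ℝ)) →
          WHP Ds (fun ℓ G =>
            ∀ v : Fin (Ds ℓ).n,
              ((Ds ℓ).n : ℝ) ^ ((1 : ℝ) / 3) / Real.log (mD (Ds ℓ)) ≤ (deg G v : ℝ) →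
              (deg G v : ℝ) < lam * Real.sqrt (mD (Ds ℓ) : ℝ) →
              ∃ w : Fin (Ds ℓ).n, G.Adj v w ∧
                lam * Real.sqrt (mD (Ds ℓ) : ℝ) ≤ (deg G w : ℝ)) := by
  refine ⟨1, one_pos, ?_⟩
  intro lam hlam hlam1 Ds hn hfeas hpos hcen hheavy htop
  classical
  have hnle : ∀ ℓ, (Ds ℓ).n ≤ 2 * mD (Ds ℓ) + 1 := by
    intro ℓ
    have h1 : (Ds ℓ).n ≤ ∑ i, (Ds ℓ).d i := by
      have := Finset.card_nsmul_le_sum (Finset.univ) ((Ds ℓ).d) 1 (fun i _ => hpos ℓ i)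
      simpa using this
    have h2 := Nat.div_add_mod (∑ i, (Ds ℓ).d i) 2
    have h4 : (∑ i, (Ds ℓ).d i) % 2 < 2 := Nat.mod_lt _ (by norm_num)
    have h3 : mD (Ds ℓ) = (∑ i, (Ds ℓ).d i) / 2 := rfl
    omega
  have hmtend : Filter.Tendsto (fun ℓ => mD (Ds ℓ)) Filter.atTop Filter.atTop := by
    rw [Filter.tendsto_atTop]
    intro b
    filter_upwards [hn.eventually_ge_atTop (2*b+1)] with ℓ hℓ
    have := hnle ℓ
    omega
  have hnreal : Filter.Tendsto (fun ℓ => ((Ds ℓ).n : ℝ)) Filter.atTop Filter.atTop :=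
    tendsto_natCast_atTop_atTop.comp hn
  have hmreal : Filter.Tendsto (fun ℓ => (mD (Ds ℓ) : ℝ)) Filter.atTop Filter.atTop :=
    tendsto_natCast_atTop_atTop.comp hmtend
  have ev3real : ∀ᶠ x : ℝ in Filter.atTop, 24 * Real.log x ≤ x ^ ((1:ℝ)/3) := by
    have h := (isLittleO_log_rpow_atTop (by norm_num : (0:ℝ) < 1/3)).def
      (by norm_num : (0:ℝ) < 1/24)
    filter_upwards [h, Filter.eventually_ge_atTop (1:ℝ)] with x hx hx1
    have hlx : 0 ≤ Real.log x := Real.log_nonneg hx1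
    have hrx : (0:ℝ) ≤ x ^ ((1:ℝ)/3) := Real.rpow_nonneg (by linarith) _
    rw [Real.norm_eq_abs, Real.norm_eq_abs, abs_of_nonneg hlx, abs_of_nonneg hrx] at hx
    linarith
  have ev4real : ∀ᶠ x : ℝ in Filter.atTop,
      2 * (lam * Real.sqrt x) + 4 ≤ x / (Dc * Real.log x) := by
    have t1 : Filter.Tendsto (fun x : ℝ => Real.log x / x ^ ((1:ℝ)/2))
        Filter.atTop (nhds 0) :=
      (isLittleO_log_rpow_atTop (by norm_num : (0:ℝ) < 1/2)).tendsto_div_nhds_zero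
    have t2 : Filter.Tendsto (fun x : ℝ => Real.log x / x) Filter.atTop (nhds 0) :=
      Real.isLittleO_log_id_atTop.tendsto_div_nhds_zero
    have t3 : Filter.Tendsto (fun x : ℝ =>
        2*lam*Dc*(Real.log x / x ^ ((1:ℝ)/2)) + 4*Dc*(Real.log x / x))
        Filter.atTop (nhds 0) := by
      have := (t1.const_mul (2*lam*Dc)).add (t2.const_mul (4*Dc))
      simpa using this
    have t4 := t3.eventually_lt_const (by norm_num : (0:ℝ) < 1)
    filter_upwards [t4, Filter.eventually_ge_atTop (1:ℝ),
      Real.tendsto_log_atTop.eventually_ge_atTop 1] with x h1 hx1 hlx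
    have hxpos : (0:ℝ) < x := by linarith
    have hsx : (0:ℝ) < Real.sqrt x := Real.sqrt_pos.2 hxpos
    have hDl : (0:ℝ) < Dc * Real.log x := mul_pos hDc (by linarith)
    rw [le_div_iff₀ hDl]
    rw [← Real.sqrt_eq_rpow] at h1
    have e1 : x / Real.sqrt x = Real.sqrt x := by
      rw [eq_comm, eq_div_iff hsx.ne']
      exact Real.mul_self_sqrt hxpos.le
    have key := mul_le_mul_of_nonneg_right h1.le hxpos.le
    calc (2*(lam*Real.sqrt x)+4)*(Dc*Real.log x)
        = 2*lam*Dc*(Real.log x * (x / Real.sqrt x)) + 4*Dc*(Real.log x / x * x) := by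
          rw [e1, div_mul_cancel₀ _ hxpos.ne']
          ring
      _ = (2*lam*Dc*(Real.log x / Real.sqrt x) + 4*Dc*(Real.log x / x)) * x := by
          ring
      _ ≤ 1 * x := key
      _ = x := one_mul x
  have houter : Filter.Tendsto (fun x : ℝ => (Real.log x)^(8:ℕ) / x ^ ((1:ℝ)/3))
      Filter.atTop (nhds 0) := by
    have h := (isLittleO_log_rpow_rpow_atTop (8:ℝ)
      (by norm_num : (0:ℝ) < 1/3)).tendsto_div_nhds_zero
    refine h.congr (fun x => ?_)
    rw [show ((8:ℝ)) = ((8:ℕ):ℝ) by norm_num, Real.rpow_natCast]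
  set g : ℕ → ℝ := fun ℓ =>
    (12*Dc)^4 * 2^8 * (Real.log ((Ds ℓ).n))^8 / ((Ds ℓ).n : ℝ) ^ ((1:ℝ)/3) with hg
  have hgto : Filter.Tendsto g Filter.atTop (nhds 0) := by
    have h2 := (houter.comp hnreal).const_mul ((12*Dc)^4 * 2^8)
    rw [mul_zero] at h2
    refine h2.congr (fun ℓ => ?_)
    rw [hg]
    simp only [Function.comp_apply]
    rw [mul_div_assoc]
  set bad : ℕ → ℝ := fun ℓ =>
    (((graphs (Ds ℓ)).filter fun G => ¬ (∀ v : Fin (Ds ℓ).n,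
        ((Ds ℓ).n : ℝ) ^ ((1:ℝ)/3) / Real.log (mD (Ds ℓ)) ≤ (deg G v : ℝ) →
        (deg G v : ℝ) < lam * Real.sqrt (mD (Ds ℓ) : ℝ) →
        ∃ w : Fin (Ds ℓ).n, G.Adj v w ∧
          lam * Real.sqrt (mD (Ds ℓ) : ℝ) ≤ (deg G w : ℝ))).card : ℝ) /
      ((graphs (Ds ℓ)).card : ℝ) with hbad
  have hbadnn : ∀ ℓ, 0 ≤ bad ℓ := fun ℓ => by rw [hbad]; positivity
  have hbound : ∀ᶠ ℓ in Filter.atTop, bad ℓ ≤ g ℓ := by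
    filter_upwards [hmtend.eventually_ge_atTop 2, hn.eventually_ge_atTop 5,
      hnreal.eventually ev3real, hmreal.eventually ev4real] with ℓ h2m h5n h24 hgap
    obtain ⟨h4, hineq⟩ := htop ℓ
    exact main_bound (Ds ℓ) lam Dc hlam hDc (hfeas ℓ) h4 hineq h2m h5n h24 hgap
  have hbadto : Filter.Tendsto bad Filter.atTop (nhds 0) :=
    squeeze_zero' (Filter.Eventually.of_forall hbadnn) hbound hgto
  unfold WHP
  have hprob : ∀ ℓ, prob (Ds ℓ) (fun G => ∀ v : Fin (Ds ℓ).n,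
      ((Ds ℓ).n : ℝ) ^ ((1 : ℝ) / 3) / Real.log (mD (Ds ℓ)) ≤ (deg G v : ℝ) →
      (deg G v : ℝ) < lam * Real.sqrt (mD (Ds ℓ) : ℝ) →
      ∃ w : Fin (Ds ℓ).n, G.Adj v w ∧
        lam * Real.sqrt (mD (Ds ℓ) : ℝ) ≤ (deg G w : ℝ)) = 1 - bad ℓ := by
    intro ℓ
    have hCpos : (0:ℝ) < ((graphs (Ds ℓ)).card : ℝ) := by
      exact_mod_cast Finset.card_pos.2 (hfeas ℓ)
    have hsplit := Finset.card_filter_add_card_filter_not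
      (s := graphs (Ds ℓ)) (p := fun G => ∀ v : Fin (Ds ℓ).n,
        ((Ds ℓ).n : ℝ) ^ ((1 : ℝ) / 3) / Real.log (mD (Ds ℓ)) ≤ (deg G v : ℝ) →
        (deg G v : ℝ) < lam * Real.sqrt (mD (Ds ℓ) : ℝ) →
        ∃ w : Fin (Ds ℓ).n, G.Adj v w ∧
          lam * Real.sqrt (mD (Ds ℓ) : ℝ) ≤ (deg G w : ℝ))
    have hAB : ((((graphs (Ds ℓ)).filter fun G => ∀ v : Fin (Ds ℓ).n,
        ((Ds ℓ).n : ℝ) ^ ((1 : ℝ) / 3) / Real.log (mD (Ds ℓ)) ≤ (deg G v : ℝ) →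
        (deg G v : ℝ) < lam * Real.sqrt (mD (Ds ℓ) : ℝ) →
        ∃ w : Fin (Ds ℓ).n, G.Adj v w ∧
          lam * Real.sqrt (mD (Ds ℓ) : ℝ) ≤ (deg G w : ℝ)).card : ℕ) : ℝ) + bad ℓ *
        ((graphs (Ds ℓ)).card : ℝ) = ((graphs (Ds ℓ)).card : ℝ) := by
      rw [hbad]
      rw [div_mul_cancel₀ _ hCpos.ne']
      exact_mod_cast hsplit
    rw [prob, eq_sub_iff_add_eq, div_add' _ _ _ hCpos.ne']
    rw [div_eq_one_iff_eq hCpos.ne']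
    convert hAB using 4
    exact Finset.filter_congr_decidable _ _ _
  refine Filter.Tendsto.congr (fun ℓ => (hprob ℓ).symm) ?_
  have hfin : Filter.Tendsto (fun ℓ => 1 - bad ℓ) Filter.atTop (nhds (1 - 0)) :=
    Filter.Tendsto.sub tendsto_const_nhds hbadto
  simpa using hfin

end RandomGraphPaper
end
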